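/- arXiv:2101.10406 — 6 statements merged into one kernel-verified Lean document; each statement's English description precedes it below -/
import Mathlib

section
/- Let f : ℝ² → ℝ² be continuous admitting a topological horseshoe on disjoint h-sets N₀, N₁ (i.e., all four horizontal covering relations N_i ⟹ N_j, i,j ∈ {0,1}, hold). Then for every n ≥ 1, f has a periodic point of least period exactly n. -/
open Set Finset Real

noncomputable section




private lemma norm_pos_of_le {ε : ℝ} {z : ℂ} (hε : 0 < ε) (h : ε ≤ ‖z‖) : z ≠ 0 := by
  intro h0; rw [h0, norm_zero] at h; linarith

private lemma ratio_slit {u v : ℂ} (hv : v ≠ 0) (h : ‖u - v‖ < ‖v‖) :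
    u / v ∈ Complex.slitPlane := by
  have hvn : (0:ℝ) < ‖v‖ := norm_pos_iff.mpr hv
  have h1 : ‖u / v - 1‖ < 1 := by
    have : u / v - 1 = (u - v) / v := by field_simp
    rw [this, norm_div]
    exact (div_lt_one hvn).mpr h
  rw [Complex.mem_slitPlane_iff]
  left
  have hre : |(u / v - 1).re| ≤ ‖u / v - 1‖ := Complex.abs_re_le_norm _
  have : (u / v - 1).re = (u / v).re - 1 := by simp
  rw [this] at hre
  have := abs_le.mp hre
  linarith [this.1]

/-- Existence of a continuous logarithm on the unit square, by explicit formula. -/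
private lemma existsLog (G : ℝ × ℝ → ℂ) (hG : Continuous G) (ε : ℝ) (hε : 0 < ε) (n : ℕ)
    (hlow : ∀ p, ε ≤ ‖G p‖)
    (hoscY : ∀ x y y', y ∈ Icc (0:ℝ) 1 → y' ∈ Icc (0:ℝ) 1 → |y - y'| ≤ 1/(n+1) →
       ‖G (x, y) - G (x, y')‖ < ε)
    (hoscX : ∀ x x', x ∈ Icc (0:ℝ) 1 → x' ∈ Icc (0:ℝ) 1 → |x - x'| ≤ 1/(n+1) →
       ‖G (x, 0) - G (x', 0)‖ < ε) :
    ∃ g : ℝ × ℝ → ℂ, Continuous g ∧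
      ∀ x y, x ∈ Icc (0:ℝ) 1 → y ∈ Icc (0:ℝ) 1 → Complex.exp (g (x, y)) = G (x, y) := by
  have hne : ∀ p, G p ≠ 0 := fun p => norm_pos_of_le hε (hlow p)
  set m : ℕ := n + 1 with hm
  have hmpos : (0:ℝ) < m := by positivity
  set t : ℕ → ℝ := fun j => (j : ℝ) / (m : ℝ) with ht
  have ht0 : t 0 = 0 := by simp [ht]
  have htm : t m = 1 := by show (m:ℝ)/(m:ℝ) = 1; exact div_self hmpos.ne'
  have htstep : ∀ j : ℕ, t (j+1) - t j = 1/(n+1) := by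
    intro j; show ((j+1:ℕ):ℝ)/(m:ℝ) - (j:ℝ)/(m:ℝ) = 1/(n+1); rw [hm]; push_cast; ring
  have htmono : ∀ j : ℕ, t j ≤ t (j+1) := by
    intro j
    have := htstep j
    have : (0:ℝ) < 1/(n+1) := by positivity
    linarith [htstep j]
  have htnn : ∀ j : ℕ, 0 ≤ t j := by intro j; positivity
  have htle1 : ∀ j : ℕ, j ≤ m → t j ≤ 1 := by
    intro j hj
    rw [ht]
    rw [div_le_one hmpos]
    exact_mod_cast hj
  set md : ℕ → ℝ → ℝ := fun j s => min (max s (t j)) (t (j+1)) with hmd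
  have hmd_mem : ∀ j s, md j s ∈ Icc (t j) (t (j+1)) := by
    intro j s
    constructor
    · exact le_min (le_max_right _ _) (htmono j)
    · exact min_le_right _ _
  have hmd_mem01 : ∀ j s, j < m → md j s ∈ Icc (0:ℝ) 1 := by
    intro j s hj
    have h := hmd_mem j s
    exact ⟨le_trans (htnn j) h.1, le_trans h.2 (htle1 (j+1) hj)⟩
  have htmem01 : ∀ j : ℕ, j < m → t j ∈ Icc (0:ℝ) 1 :=
    fun j hj => ⟨htnn j, htle1 j (le_of_lt hj)⟩
  have hmddist : ∀ j s, |md j s - t j| ≤ 1/(n+1) := by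
    intro j s
    have h := hmd_mem j s
    have hpos : (0:ℝ) ≤ 1/(n+1) := by positivity
    rw [abs_le]
    constructor
    · linarith [h.1, hpos]
    · linarith [h.2, htstep j]
  -- the candidate logarithm
  set g : ℝ × ℝ → ℂ := fun p =>
    Complex.log (G (0, 0)) +
    (∑ j ∈ Finset.range m, Complex.log (G (md j p.1, 0) / G (t j, 0))) +
    (∑ j ∈ Finset.range m, Complex.log (G (p.1, md j p.2) / G (p.1, t j))) with hg
  refine ⟨g, ?_, ?_⟩
  · -- continuity
    have hcmd : ∀ j : ℕ, Continuous (fun s : ℝ => md j s) := by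
      intro j; exact (continuous_id.max continuous_const).min continuous_const
    apply Continuous.add
    apply Continuous.add continuous_const
    · apply continuous_finset_sum
      intro j hj
      have hj' : j < m := Finset.mem_range.mp hj
      apply Continuous.clog
      · exact ((hG.comp (((hcmd j).comp continuous_fst).prodMk continuous_const)).div
          continuous_const (fun _ => hne _))
      · intro p
        exact ratio_slit (hne _) (lt_of_lt_of_le
            (hoscX (md j p.1) (t j) (hmd_mem01 j p.1 hj') (htmem01 j hj') (hmddist j p.1))
            (hlow _))
    · apply continuous_finset_sum
      intro j hj
      have hj' : j < m := Finset.mem_range.mp hj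
      apply Continuous.clog
      · exact ((hG.comp (continuous_fst.prodMk ((hcmd j).comp continuous_snd))).div
          (hG.comp (continuous_fst.prodMk continuous_const)) (fun _ => hne _))
      · intro p
        exact ratio_slit (hne _) (lt_of_lt_of_le
            (hoscY p.1 (md j p.2) (t j) (hmd_mem01 j p.2 hj') (htmem01 j hj') (hmddist j p.2))
            (hlow _))
  · -- exponential property
    intro x y hx hy
    have tele : ∀ (F : ℝ → ℂ), (∀ s, F s ≠ 0) → ∀ (sv : ℝ), 0 ≤ sv → ∀ k, k ≤ m →
        ∏ j ∈ Finset.range k, F (md j sv) / F (t j) = F (min sv (t k)) / F (t 0) := by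
      intro F hF sv hsv k
      induction k with
      | zero =>
        intro _
        rw [Finset.prod_range_zero, ht0, min_eq_right hsv, div_self (hF 0)]
      | succ k ih =>
        intro hk
        have hk' : k ≤ m := Nat.le_of_succ_le hk
        rw [Finset.prod_range_succ, ih hk']
        rcases le_total sv (t k) with hc | hc
        · have h1 : md k sv = t k := by
            rw [hmd]
            simp only
            rw [max_eq_right hc, min_eq_left (htmono k)]
          have h2 : min sv (t k) = sv := min_eq_left hc
          have h3 : min sv (t (k+1)) = sv := min_eq_left (le_trans hc (htmono k))
          rw [h1, h2, h3, div_self (hF _), mul_one]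
        · have h1 : md k sv = min sv (t (k+1)) := by
            rw [hmd]; simp only
            rw [max_eq_left hc]
          have h2 : min sv (t k) = t k := min_eq_right hc
          rw [h1, h2]
          rw [div_mul_div_comm, mul_comm (F (t 0)) (F (t k)), mul_div_mul_left _ _ (hF (t k))]
    have hG00 : G (0,0) ≠ 0 := hne _
    rw [hg]
    simp only
    rw [Complex.exp_add, Complex.exp_add, Complex.exp_sum, Complex.exp_sum,
      Complex.exp_log hG00]
    have e1 : ∀ j ∈ Finset.range m,
        Complex.exp (Complex.log (G (md j x, 0) / G (t j, 0))) = G (md j x, 0) / G (t j, 0) :=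
      fun j _ => Complex.exp_log (div_ne_zero (hne _) (hne _))
    have e2 : ∀ j ∈ Finset.range m,
        Complex.exp (Complex.log (G (x, md j y) / G (x, t j))) = G (x, md j y) / G (x, t j) :=
      fun j _ => Complex.exp_log (div_ne_zero (hne _) (hne _))
    rw [Finset.prod_congr rfl e1, Finset.prod_congr rfl e2]
    rw [tele (fun s => G (s, 0)) (fun s => hne _) x hx.1 m le_rfl]
    rw [tele (fun s => G (x, s)) (fun s => hne _) y hy.1 m le_rfl]
    rw [htm, ht0, min_eq_left hx.2, min_eq_left hy.2]
    rw [show ((0:ℝ),(0:ℝ)) = (0 : ℝ × ℝ) from rfl] at hG00 ⊢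
    field_simp
    rw [mul_comm, mul_div_assoc, div_self (hne (x,0)), mul_one]




private lemma lift_const {d : ℝ → ℂ} (hd : Continuous d)
    (h1 : ∀ t ∈ Icc (0:ℝ) 1, Complex.exp (d t) = 1) : d 0 = d 1 := by
  have h0m : (0:ℝ) ∈ Icc (0:ℝ) 1 := by norm_num
  have h1m : (1:ℝ) ∈ Icc (0:ℝ) 1 := by norm_num
  obtain ⟨m0, hm0⟩ := Complex.exp_eq_one_iff.mp (h1 0 h0m)
  obtain ⟨m1, hm1⟩ := Complex.exp_eq_one_iff.mp (h1 1 h1m)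
  by_cases hmm : m0 = m1
  · rw [hm0, hm1, hmm]
  exfalso
  have him : ∀ (k : ℤ), ((k : ℂ) * (2 * (π:ℝ) * Complex.I)).im = k * (2*π) := by
    intro k
    simp [Complex.mul_im]
  set q : ℝ → ℝ := fun t => (d t).im with hq
  have hqc : ContinuousOn q (Icc 0 1) := (Complex.continuous_im.comp hd).continuousOn
  have hqint : ∀ t ∈ Icc (0:ℝ) 1, ∃ k : ℤ, q t = k * (2 * π) := by
    intro t ht
    obtain ⟨k, hk⟩ := Complex.exp_eq_one_iff.mp (h1 t ht)
    exact ⟨k, by rw [hq]; simp only; rw [hk, him]⟩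
  have hq0 : q 0 = m0 * (2*π) := by rw [hq]; simp only; rw [hm0, him]
  have hq1 : q 1 = m1 * (2*π) := by rw [hq]; simp only; rw [hm1, him]
  have hparity : ∀ y ∈ Icc (q 0) (q 1) ∪ Icc (q 1) (q 0), ∃ t ∈ Icc (0:ℝ) 1, q t = y := by
    intro y hy
    rcases hy with hy | hy
    · obtain ⟨t, ht, hqt⟩ := intermediate_value_Icc (by norm_num : (0:ℝ) ≤ 1) hqc hy
      exact ⟨t, ht, hqt⟩
    · obtain ⟨t, ht, hqt⟩ := intermediate_value_Icc' (by norm_num : (0:ℝ) ≤ 1) hqc hy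
      exact ⟨t, ht, hqt⟩
  rcases lt_or_gt_of_ne hmm with hlt | hlt
  · have hmr : (m0:ℝ) + 1 ≤ m1 := by exact_mod_cast hlt
    have : (m0:ℝ)*(2*π) + π ∈ Icc (q 0) (q 1) := by
      rw [hq0, hq1]
      constructor <;> nlinarith [pi_pos]
    obtain ⟨t, ht, hqt⟩ := hparity _ (Or.inl this)
    obtain ⟨k, hk⟩ := hqint t ht
    rw [hk] at hqt
    have : ((2*k : ℤ) : ℝ) = ((2*m0 + 1 : ℤ) : ℝ) := by push_cast; nlinarith [pi_pos]
    have := Int.cast_injective this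
    omega
  · have hmr : (m1:ℝ) + 1 ≤ m0 := by exact_mod_cast hlt
    have : (m1:ℝ)*(2*π) + π ∈ Icc (q 1) (q 0) := by
      rw [hq0, hq1]
      constructor <;> nlinarith [pi_pos]
    obtain ⟨t, ht, hqt⟩ := hparity _ (Or.inr this)
    obtain ⟨k, hk⟩ := hqint t ht
    rw [hk] at hqt
    have : ((2*k : ℤ) : ℝ) = ((2*m1 + 1 : ℤ) : ℝ) := by push_cast; nlinarith [pi_pos]
    have := Int.cast_injective this
    omega






private def τ (t : ℝ) : ℝ := max 0 (min 1 t)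

private lemma τ_mem (t : ℝ) : τ t ∈ Icc (0:ℝ) 1 :=
  ⟨le_max_left _ _, max_le (by norm_num) (min_le_left _ _)⟩

private lemma τ_eq {t : ℝ} (ht : t ∈ Icc (0:ℝ) 1) : τ t = t := by
  rw [τ, min_eq_right ht.2, max_eq_right ht.1]

private lemma τ_cont : Continuous τ := continuous_const.max (continuous_const.min continuous_id)

private lemma square_mod (G : ℝ × ℝ → ℂ) (hG : Continuous G) (ε : ℝ) (hε : 0 < ε) :
    ∃ n : ℕ, ∀ p q : ℝ × ℝ, p ∈ Icc (0:ℝ) 1 ×ˢ Icc (0:ℝ) 1 → q ∈ Icc (0:ℝ) 1 ×ˢ Icc (0:ℝ) 1 →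
      dist p q ≤ 1/(n+1) → ‖G p - G q‖ < ε := by
  have hK : IsCompact (Icc (0:ℝ) 1 ×ˢ Icc (0:ℝ) 1) := isCompact_Icc.prod isCompact_Icc
  have hUC := hK.uniformContinuousOn_of_continuous hG.continuousOn
  rw [Metric.uniformContinuousOn_iff] at hUC
  obtain ⟨δ, hδ, hUC⟩ := hUC ε hε
  obtain ⟨n, hn⟩ := exists_nat_one_div_lt hδ
  refine ⟨n, fun p q hp hq hd => ?_⟩
  have h2 := hUC p hp q hq (lt_of_le_of_lt hd hn)
  rwa [dist_eq_norm] at h2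

private lemma square_low (G : ℝ × ℝ → ℂ) (hG : Continuous G)
    (h0 : ∀ p ∈ Icc (0:ℝ) 1 ×ˢ Icc (0:ℝ) 1, G p ≠ 0) :
    ∃ ε > 0, ∀ p ∈ Icc (0:ℝ) 1 ×ˢ Icc (0:ℝ) 1, ε ≤ ‖G p‖ := by
  have hK : IsCompact (Icc (0:ℝ) 1 ×ˢ Icc (0:ℝ) 1) := isCompact_Icc.prod isCompact_Icc
  have hne : (Icc (0:ℝ) 1 ×ˢ Icc (0:ℝ) 1).Nonempty :=
    ⟨(0,0), by constructor <;> constructor <;> norm_num⟩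
  obtain ⟨p0, hp0, hmin⟩ := hK.exists_isMinOn hne (hG.norm.continuousOn)
  exact ⟨‖G p0‖, norm_pos_iff.mpr (h0 p0 hp0), fun p hp => hmin hp⟩

private lemma aff_mem {A B : ℝ} (hAB : A < B) (t : ℝ) : A + (B-A) * τ t ∈ Icc A B := by
  have h1 := τ_mem t
  constructor
  · nlinarith [h1.1]
  · nlinarith [h1.2]

set_option maxHeartbeats 1000000 in
private lemma miranda (A B C D : ℝ) (hAB : A < B) (hCD : C < D)
    (u v : ℝ × ℝ → ℝ) (hu : Continuous u) (hv : Continuous v)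
    (huL : ∀ y ∈ Icc C D, u (A, y) ≤ 0) (huR : ∀ y ∈ Icc C D, 0 ≤ u (B, y))
    (hvB : ∀ x ∈ Icc A B, v (x, C) ≤ 0) (hvT : ∀ x ∈ Icc A B, 0 ≤ v (x, D)) :
    ∃ p ∈ Icc A B ×ˢ Icc C D, u p = 0 ∧ v p = 0 := by
  by_contra hcon
  push_neg at hcon
  classical
  set Fc : ℝ × ℝ → ℂ := fun p => (u p : ℂ) + (v p : ℂ) * Complex.I with hFc
  have hFcre : ∀ p, (Fc p).re = u p := by intro p; simp [hFc]
  have hFcim : ∀ p, (Fc p).im = v p := by intro p; simp [hFc]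
  have hFccont : Continuous Fc :=
    ((Complex.continuous_ofReal.comp hu).add
      ((Complex.continuous_ofReal.comp hv).mul continuous_const))
  have hFcne : ∀ p ∈ Icc A B ×ˢ Icc C D, Fc p ≠ 0 := by
    intro p hp h0
    refine hcon p hp ?_ ?_
    · rw [← hFcre p, h0]; simp
    · rw [← hFcim p, h0]; simp
  -- boundary parametrization
  set cw : ℝ → ℝ := fun s => Real.cos (2*π*s) with hcw
  set sw : ℝ → ℝ := fun s => Real.sin (2*π*s) with hsw
  have hpyth : ∀ s, sw s ^ 2 + cw s ^ 2 = 1 := fun s => Real.sin_sq_add_cos_sq _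
  set M : ℝ → ℝ := fun s => max |cw s| |sw s| with hM
  have hMpos : ∀ s, 0 < M s := by
    intro s
    by_contra h
    push_neg at h
    have h1 : cw s = 0 := abs_nonpos_iff.mp (le_trans (le_max_left _ _) h)
    have h2 : sw s = 0 := abs_nonpos_iff.mp (le_trans (le_max_right _ _) h)
    have := hpyth s
    rw [h1, h2] at this
    norm_num at this
  have hcwM : ∀ s, |cw s| ≤ M s := fun s => le_max_left _ _
  have hswM : ∀ s, |sw s| ≤ M s := fun s => le_max_right _ _
  have hcwcont : Continuous cw := Real.continuous_cos.comp (continuous_const.mul continuous_id)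
  have hswcont : Continuous sw := Real.continuous_sin.comp (continuous_const.mul continuous_id)
  have hMcont : Continuous M := (hcwcont.abs).max (hswcont.abs)
  set cx := (A+B)/2 with hcx
  set wx := (B-A)/2 with hwx
  set cy := (C+D)/2 with hcy
  set hh := (D-C)/2 with hhh
  have hwxpos : 0 < wx := by rw [hwx]; linarith
  have hhhpos : 0 < hh := by rw [hhh]; linarith
  set bp : ℝ → ℝ × ℝ := fun s => (cx + wx * (cw s / M s), cy + hh * (sw s / M s)) with hbp
  have hbpcont : Continuous bp := by
    apply Continuous.prodMk
    · exact continuous_const.add (continuous_const.mul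
        (hcwcont.div hMcont (fun s => (hMpos s).ne')))
    · exact continuous_const.add (continuous_const.mul
        (hswcont.div hMcont (fun s => (hMpos s).ne')))
  have habs_div : ∀ s, |cw s / M s| ≤ 1 ∧ |sw s / M s| ≤ 1 := by
    intro s
    constructor
    · rw [abs_div, abs_of_pos (hMpos s)]
      exact div_le_one_of_le₀ (hcwM s) (hMpos s).le
    · rw [abs_div, abs_of_pos (hMpos s)]
      exact div_le_one_of_le₀ (hswM s) (hMpos s).le
  have hbpmem : ∀ s, bp s ∈ Icc A B ×ˢ Icc C D := by
    intro s
    obtain ⟨h1, h2⟩ := habs_div s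
    rw [abs_le] at h1 h2
    constructor
    · constructor
      · rw [hbp]; simp only; rw [hcx, hwx]; nlinarith [h1.1]
      · rw [hbp]; simp only; rw [hcx, hwx]; nlinarith [h1.2]
    · constructor
      · rw [hbp]; simp only; rw [hcy, hhh]; nlinarith [h2.1]
      · rw [hbp]; simp only; rw [hcy, hhh]; nlinarith [h2.2]
  set E : ℝ → ℂ := fun s => Complex.exp (((2*π*s : ℝ) : ℂ) * Complex.I) with hE
  have hEre : ∀ s, (E s).re = cw s := fun s => Complex.exp_ofReal_mul_I_re _
  have hEim : ∀ s, (E s).im = sw s := fun s => Complex.exp_ofReal_mul_I_im _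
  have hEcont : Continuous E := by
    apply Complex.continuous_exp.comp
    exact (Complex.continuous_ofReal.comp (continuous_const.mul continuous_id)).mul continuous_const
  set H : ℝ × ℝ → ℂ := fun q =>
    ((1 - τ q.2 : ℝ) : ℂ) * Fc (bp q.1) + ((τ q.2 : ℝ) : ℂ) * E q.1 with hH
  have hHcont : Continuous H := by
    apply Continuous.add
    · exact (Complex.continuous_ofReal.comp
        (continuous_const.sub (τ_cont.comp continuous_snd))).mul
        (hFccont.comp (hbpcont.comp continuous_fst))
    · exact (Complex.continuous_ofReal.comp (τ_cont.comp continuous_snd)).mul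
        (hEcont.comp continuous_fst)
  have hHre : ∀ q, (H q).re = (1 - τ q.2) * u (bp q.1) + τ q.2 * cw q.1 := by
    intro q
    rw [hH]; simp only [Complex.add_re, Complex.re_ofReal_mul, hFcre, hEre]
  have hHim : ∀ q, (H q).im = (1 - τ q.2) * v (bp q.1) + τ q.2 * sw q.1 := by
    intro q
    rw [hH]; simp only [Complex.add_im, Complex.im_ofReal_mul, hFcim, hEim]
  -- H is nonvanishing
  have hH0 : ∀ q, H q ≠ 0 := by
    intro q h0
    have ht01 := τ_mem q.2
    rcases eq_or_lt_of_le ht01.1 with ht0 | htpos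
    · -- τ = 0 : H = Fc (bp q.1)
      have : H q = Fc (bp q.1) := by
        rw [hH]; simp only [← ht0]; push_cast; ring
      exact hFcne _ (hbpmem q.1) (this ▸ h0)
    · have hre0 : (H q).re = 0 := by rw [h0]; simp
      have him0 : (H q).im = 0 := by rw [h0]; simp
      rw [hHre] at hre0
      rw [hHim] at him0
      rcases le_total |sw q.1| |cw q.1| with hcase | hcase
      · -- vertical face
        have hMc : M q.1 = |cw q.1| := max_eq_left hcase
        have hcne : cw q.1 ≠ 0 := by
          intro hz
          have := hMpos q.1
          rw [hMc, hz] at this; simp at this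
        rcases lt_or_gt_of_ne hcne with hneg | hpos
        · -- left face : bp q.1 = (A, y')
          have hb1 : (bp q.1).1 = A := by
            rw [hbp]; simp only
            rw [hMc, abs_of_neg hneg, hcx, hwx]
            field_simp
            ring
          have hbA : bp q.1 = (A, (bp q.1).2) := by
            rw [← hb1]
          have hule : u (bp q.1) ≤ 0 := by
            rw [hbA]; exact huL _ (hbpmem q.1).2
          have : (1 - τ q.2) * u (bp q.1) + τ q.2 * cw q.1 < 0 := by
            nlinarith [ht01.2, htpos]
          linarith [hre0]
        · have hb1 : (bp q.1).1 = B := by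
            rw [hbp]; simp only
            rw [hMc, abs_of_pos hpos, hcx, hwx]
            field_simp
            ring
          have hbB : bp q.1 = (B, (bp q.1).2) := by rw [← hb1]
          have hule : 0 ≤ u (bp q.1) := by
            rw [hbB]; exact huR _ (hbpmem q.1).2
          have : 0 < (1 - τ q.2) * u (bp q.1) + τ q.2 * cw q.1 := by
            nlinarith [ht01.2, htpos]
          linarith [hre0]
      · -- horizontal face
        have hMs : M q.1 = |sw q.1| := max_eq_right hcase
        have hsne : sw q.1 ≠ 0 := by
          intro hz
          have := hMpos q.1
          rw [hMs, hz] at this; simp at this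
        rcases lt_or_gt_of_ne hsne with hneg | hpos
        · have hb2 : (bp q.1).2 = C := by
            rw [hbp]; simp only
            rw [hMs, abs_of_neg hneg, hcy, hhh]
            field_simp
            ring
          have hbC : bp q.1 = ((bp q.1).1, C) := by rw [← hb2]
          have hvle : v (bp q.1) ≤ 0 := by
            rw [hbC]; exact hvB _ (hbpmem q.1).1
          have : (1 - τ q.2) * v (bp q.1) + τ q.2 * sw q.1 < 0 := by
            nlinarith [ht01.2, htpos]
          linarith [him0]
        · have hb2 : (bp q.1).2 = D := by
            rw [hbp]; simp only
            rw [hMs, abs_of_pos hpos, hcy, hhh]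
            field_simp
            ring
          have hbD : bp q.1 = ((bp q.1).1, D) := by rw [← hb2]
          have hvle : 0 ≤ v (bp q.1) := by
            rw [hbD]; exact hvT _ (hbpmem q.1).1
          have : 0 < (1 - τ q.2) * v (bp q.1) + τ q.2 * sw q.1 := by
            nlinarith [ht01.2, htpos]
          linarith [him0]
  -- periodicity of H in first variable
  have hcwper : ∀ s, cw (Int.fract s) = cw s := by
    intro s
    rw [hcw]; simp only
    rw [Int.fract]
    rw [show 2*π*(s - ↑⌊s⌋) = 2*π*s - ↑⌊s⌋ * (2*π) by ring]
    exact Real.cos_sub_int_mul_two_pi _ _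
  have hswper : ∀ s, sw (Int.fract s) = sw s := by
    intro s
    rw [hsw]; simp only
    rw [Int.fract]
    rw [show 2*π*(s - ↑⌊s⌋) = 2*π*s - ↑⌊s⌋ * (2*π) by ring]
    exact Real.sin_sub_int_mul_two_pi _ _
  have hEper : ∀ s, E (Int.fract s) = E s := by
    intro s
    rw [hE]; simp only
    rw [Int.fract]
    rw [show (((2*π*(s - ↑⌊s⌋) : ℝ) : ℂ) * Complex.I)
        = ((2*π*s : ℝ) : ℂ) * Complex.I - (⌊s⌋ : ℂ) * (2 * (π:ℝ) * Complex.I) by push_cast; ring]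
    rw [Complex.exp_sub, Complex.exp_int_mul_two_pi_mul_I, div_one]
  have hbpper : ∀ s, bp (Int.fract s) = bp s := by
    intro s
    rw [hbp]; simp only
    rw [hM]; simp only
    rw [hcwper, hswper]
  have hHnorm : ∀ q : ℝ × ℝ, H q = H (Int.fract q.1, τ q.2) := by
    intro q
    rw [hH]; simp only
    rw [τ_eq (τ_mem q.2), hbpper, hEper]
  have hfr_mem : ∀ s : ℝ, Int.fract s ∈ Icc (0:ℝ) 1 :=
    fun s => ⟨Int.fract_nonneg s, (Int.fract_lt_one s).le⟩
  obtain ⟨εH, hεH, hHlowSq⟩ := square_low H hHcont (fun p _ => hH0 p)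
  have hHlow : ∀ q, εH ≤ ‖H q‖ := by
    intro q
    rw [hHnorm q]
    exact hHlowSq _ ⟨hfr_mem q.1, τ_mem q.2⟩
  obtain ⟨nH, hnH⟩ := square_mod H hHcont εH hεH
  obtain ⟨g, hgcont, hglog⟩ := existsLog H hHcont εH hεH nH hHlow
    (by
      intro x y y' hy hy' hd
      have e1 : H (x, y) = H (Int.fract x, y) := by
        rw [hHnorm (x,y), τ_eq hy]
      have e2 : H (x, y') = H (Int.fract x, y') := by
        rw [hHnorm (x,y'), τ_eq hy']
      rw [e1, e2]
      apply hnH _ _ ⟨hfr_mem x, hy⟩ ⟨hfr_mem x, hy'⟩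
      rw [Prod.dist_eq, Real.dist_eq, Real.dist_eq]
      simp only [sub_self, abs_zero]
      rw [max_eq_right (abs_nonneg _)]
      exact hd)
    (by
      intro x x' hx hx' hd
      apply hnH _ _ ⟨hx, by norm_num⟩ ⟨hx', by norm_num⟩
      rw [Prod.dist_eq, Real.dist_eq, Real.dist_eq]
      simp only [sub_self, abs_zero]
      rw [max_eq_left (abs_nonneg _)]
      exact hd)
  -- log of Fc over the rectangle
  set G2 : ℝ × ℝ → ℂ := fun q => Fc (A + (B-A) * τ q.1, C + (D-C) * τ q.2) with hG2
  have hG2cont : Continuous G2 := by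
    apply hFccont.comp
    exact (continuous_const.add (continuous_const.mul (τ_cont.comp continuous_fst))).prodMk
      (continuous_const.add (continuous_const.mul (τ_cont.comp continuous_snd)))
  have hinmem : ∀ t : ℝ, A + (B-A) * τ t ∈ Icc A B := aff_mem hAB
  have hinmem2 : ∀ t : ℝ, C + (D-C) * τ t ∈ Icc C D := aff_mem hCD
  have hG2ne : ∀ q, G2 q ≠ 0 := by
    intro q
    exact hFcne _ ⟨hinmem q.1, hinmem2 q.2⟩
  have hG2fact : ∀ q : ℝ × ℝ, G2 q = G2 (τ q.1, τ q.2) := by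
    intro q
    rw [hG2]; simp only
    rw [τ_eq (τ_mem q.1), τ_eq (τ_mem q.2)]
  obtain ⟨εG, hεG, hGlowSq⟩ := square_low G2 hG2cont (fun p _ => hG2ne p)
  have hGlow : ∀ q, εG ≤ ‖G2 q‖ := by
    intro q
    rw [hG2fact q]
    exact hGlowSq _ ⟨τ_mem q.1, τ_mem q.2⟩
  obtain ⟨nG, hnG⟩ := square_mod G2 hG2cont εG hεG
  obtain ⟨h, hhcont, hhlog⟩ := existsLog G2 hG2cont εG hεG nG hGlow
    (by
      intro x y y' hy hy' hd
      have e1 : G2 (x, y) = G2 (τ x, y) := by rw [hG2fact (x,y), τ_eq hy]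
      have e2 : G2 (x, y') = G2 (τ x, y') := by rw [hG2fact (x,y'), τ_eq hy']
      rw [e1, e2]
      apply hnG _ _ ⟨τ_mem x, hy⟩ ⟨τ_mem x, hy'⟩
      rw [Prod.dist_eq, Real.dist_eq, Real.dist_eq]
      simp only [sub_self, abs_zero]
      rw [max_eq_right (abs_nonneg _)]
      exact hd)
    (by
      intro x x' hx hx' hd
      apply hnG _ _ ⟨hx, by norm_num⟩ ⟨hx', by norm_num⟩
      rw [Prod.dist_eq, Real.dist_eq, Real.dist_eq]
      simp only [sub_self, abs_zero]
      rw [max_eq_left (abs_nonneg _)]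
      exact hd)
  -- parametrization of bp inside the unit square
  set pm : ℝ → ℝ × ℝ := fun s => (((bp s).1 - A)/(B-A), ((bp s).2 - C)/(D-C)) with hpm
  have hpmmem : ∀ s, pm s ∈ Icc (0:ℝ) 1 ×ˢ Icc (0:ℝ) 1 := by
    intro s
    have h1 := (hbpmem s).1
    have h2 := (hbpmem s).2
    constructor
    · constructor
      · apply div_nonneg (by linarith [h1.1]) (by linarith)
      · rw [div_le_one (by linarith : (0:ℝ) < B - A)]; linarith [h1.2]
    · constructor
      · apply div_nonneg (by linarith [h2.1]) (by linarith)
      · rw [div_le_one (by linarith : (0:ℝ) < D - C)]; linarith [h2.2]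
  have hpmcont : Continuous pm := by
    apply Continuous.prodMk
    · exact ((continuous_fst.comp hbpcont).sub continuous_const).div_const _
    · exact ((continuous_snd.comp hbpcont).sub continuous_const).div_const _
  have hG2pm : ∀ s, G2 (pm s) = Fc (bp s) := by
    intro s
    rw [hG2, hpm]; simp only
    rw [τ_eq (hpmmem s).1, τ_eq (hpmmem s).2]
    congr 1
    have hBA : B - A ≠ 0 := by linarith
    have hDC : D - C ≠ 0 := by linarith
    rw [Prod.ext_iff]
    constructor <;> simp only [hpm] <;> field_simp <;> ring
  -- loop endpoint equalities
  have hcw10 : cw 1 = cw 0 := by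
    rw [hcw]; simp only
    norm_num [Real.cos_two_pi]
  have hsw10 : sw 1 = sw 0 := by
    rw [hsw]; simp only
    norm_num [Real.sin_two_pi]
  have hbp10 : bp 1 = bp 0 := by
    rw [hbp]; simp only
    rw [hM]; simp only
    rw [hcw10, hsw10]
  have hE10 : E 1 = E 0 := by
    rw [hE]; simp only
    rw [show (((2*π*(1:ℝ) : ℝ)) : ℂ) * Complex.I = 2 * (π:ℝ) * Complex.I by push_cast; ring]
    rw [show (((2*π*(0:ℝ) : ℝ)) : ℂ) * Complex.I = 0 by push_cast; ring]
    rw [Complex.exp_two_pi_mul_I, Complex.exp_zero]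
  have hH10 : ∀ t, H (1, t) = H (0, t) := by
    intro t
    rw [hH]; simp only
    rw [hbp10, hE10]
  have h0m : (0:ℝ) ∈ Icc (0:ℝ) 1 := by norm_num
  have h1m : (1:ℝ) ∈ Icc (0:ℝ) 1 := by norm_num
  -- w : difference of lifts at the two vertical edges
  set w : ℝ → ℂ := fun t => g (1, t) - g (0, t) with hw
  have hwconst : w 0 = w 1 := by
    apply lift_const
    · exact (hgcont.comp (continuous_const.prodMk continuous_id)).sub
        (hgcont.comp (continuous_const.prodMk continuous_id))
    · intro t ht
      rw [hw]; simp only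
      rw [Complex.exp_sub, hglog 1 t h1m ht, hglog 0 t h0m ht, hH10 t]
      exact div_self (hH0 _)
  -- w 0 = 0
  have hτ0 : τ 0 = 0 := τ_eq h0m
  have hHs0 : ∀ s, H (s, 0) = Fc (bp s) := by
    intro s
    rw [hH]; simp only
    rw [hτ0]; push_cast; ring
  have hw0 : w 0 = 0 := by
    have hd2 : (fun s => g (s, 0) - h (pm s)) 0 = (fun s => g (s, 0) - h (pm s)) 1 := by
      refine lift_const (d := fun s => g (s, 0) - h (pm s)) ?_ ?_
      · exact (hgcont.comp (continuous_id.prodMk continuous_const)).sub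
          (hhcont.comp hpmcont)
      · intro s hs
        have hpms := hpmmem s
        rw [Complex.exp_sub, hglog s 0 hs h0m,
          hhlog (pm s).1 (pm s).2 hpms.1 hpms.2]
        rw [hHs0 s]
        rw [show ((pm s).1, (pm s).2) = pm s from rfl, hG2pm s]
        exact div_self (hFcne _ (hbpmem s))
    simp only at hd2
    have hpm10 : pm 1 = pm 0 := by
      rw [hpm]; simp only
      rw [hbp10]
    rw [hpm10] at hd2
    rw [hw]; simp only
    linear_combination -hd2
  -- w 1 = 2 π i
  have hτ1 : τ 1 = 1 := τ_eq h1m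
  have hHs1 : ∀ s, H (s, 1) = E s := by
    intro s
    rw [hH]; simp only
    rw [hτ1]; push_cast; ring
  have hw1 : w 1 = 2 * (π:ℝ) * Complex.I := by
    have hd1 : (fun s => g (s, 1) - ((2*π*s : ℝ) : ℂ) * Complex.I) 0
        = (fun s => g (s, 1) - ((2*π*s : ℝ) : ℂ) * Complex.I) 1 := by
      refine lift_const (d := fun s => g (s, 1) - ((2*π*s : ℝ) : ℂ) * Complex.I) ?_ ?_
      · apply ((hgcont.comp (continuous_id.prodMk continuous_const))).sub
        exact (Complex.continuous_ofReal.comp (continuous_const.mul continuous_id)).mul continuous_const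
      · intro s hs
        rw [Complex.exp_sub, hglog s 1 hs h1m, hHs1 s, hE]
        exact div_self (by rw [← hE, ← hHs1 s]; exact hH0 _)
    simp only at hd1
    rw [hw]; simp only
    rw [show (((2*π*(0:ℝ) : ℝ)) : ℂ) * Complex.I = 0 by push_cast; ring] at hd1
    rw [show (((2*π*(1:ℝ) : ℝ)) : ℂ) * Complex.I = 2 * (π:ℝ) * Complex.I by push_cast; ring] at hd1
    linear_combination -hd1
  rw [hwconst, hw1] at hw0
  have him : (2 * (π:ℝ) * Complex.I).im = 2*π := by simp
  rw [hw0] at him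
  simp at him






private def cl (p q x : ℝ) : ℝ := max p (min q x)

private lemma cl_mem {p q : ℝ} (h : p ≤ q) (x : ℝ) : cl p q x ∈ Icc p q :=
  ⟨le_max_left _ _, max_le h (min_le_left _ _)⟩

private lemma cl_eq {p q x : ℝ} (h : x ∈ Icc p q) : cl p q x = x := by
  rw [cl, min_eq_right h.2, max_eq_right h.1]

private lemma cl_left {p q x : ℝ} (hpq : p ≤ q) (h : x ≤ p) : cl p q x = p := by
  rw [cl, min_eq_right (le_trans h hpq)]
  exact max_eq_left h

private lemma cl_right {p q x : ℝ} (hpq : p ≤ q) (h : q ≤ x) : cl p q x = q := by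
  rw [cl, min_eq_left h]
  exact max_eq_right hpq

private lemma cl_cont (p q : ℝ) : Continuous (cl p q) :=
  continuous_const.max (continuous_const.min continuous_id)

/-- the modified one-step map of the clamped expansive chain -/
private def stp (f : ℝ × ℝ → ℝ × ℝ) (r lam A1 B1 A2 B2 : ℝ) (o : Bool) (w : ℝ × ℝ) : ℝ × ℝ :=
  (cl (A2-1) (B2+1)
      ((f (cl A1 B1 w.1, cl (-r) r w.2)).1 + (if o then lam else -lam) * (w.1 - cl A1 B1 w.1)),
   cl (-r) r ((f (cl A1 B1 w.1, cl (-r) r w.2)).2))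

private lemma stp_fst (f : ℝ × ℝ → ℝ × ℝ) (r lam A1 B1 A2 B2 : ℝ) (o : Bool) (w : ℝ × ℝ) :
    (stp f r lam A1 B1 A2 B2 o w).1 = cl (A2-1) (B2+1)
      ((f (cl A1 B1 w.1, cl (-r) r w.2)).1 + (if o then lam else -lam) * (w.1 - cl A1 B1 w.1)) :=
  rfl

private lemma stp_snd (f : ℝ × ℝ → ℝ × ℝ) (r lam A1 B1 A2 B2 : ℝ) (o : Bool) (w : ℝ × ℝ) :
    (stp f r lam A1 B1 A2 B2 o w).2 = cl (-r) r ((f (cl A1 B1 w.1, cl (-r) r w.2)).2) :=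
  rfl

private lemma stp_cont {f : ℝ × ℝ → ℝ × ℝ} (hf : Continuous f) (r lam A1 B1 A2 B2 : ℝ)
    (o : Bool) : Continuous (stp f r lam A1 B1 A2 B2 o) := by
  have hpr : Continuous (fun w : ℝ × ℝ => (cl A1 B1 w.1, cl (-r) r w.2)) :=
    ((cl_cont A1 B1).comp continuous_fst).prodMk ((cl_cont (-r) r).comp continuous_snd)
  apply Continuous.prodMk
  · apply (cl_cont _ _).comp
    apply Continuous.add
    · exact continuous_fst.comp (hf.comp hpr)
    · exact continuous_const.mul (continuous_fst.sub ((cl_cont A1 B1).comp continuous_fst))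
  · exact (cl_cont _ _).comp (continuous_snd.comp (hf.comp hpr))

private lemma stp_box {f : ℝ × ℝ → ℝ × ℝ} {r lam A1 B1 A2 B2 : ℝ} {o : Bool}
    (hA2B2 : A2 ≤ B2) (hr : 0 < r) (w : ℝ × ℝ) :
    (stp f r lam A1 B1 A2 B2 o w).1 ∈ Icc (A2-1) (B2+1) ∧
    (stp f r lam A1 B1 A2 B2 o w).2 ∈ Icc (-r) r :=
  ⟨cl_mem (by linarith) _, cl_mem (by linarith) _⟩

/-- sign characterization of the excess -/
private lemma exc_neg {A1 B1 : ℝ} (hA1B1 : A1 ≤ B1) {x : ℝ} (h : x - cl A1 B1 x < 0) :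
    x < A1 ∧ cl A1 B1 x = A1 := by
  rcases lt_or_ge x A1 with hx | hx
  · exact ⟨hx, cl_left hA1B1 hx.le⟩
  rcases le_or_gt x B1 with hx2 | hx2
  · rw [cl_eq ⟨hx, hx2⟩] at h; linarith
  · rw [cl_right hA1B1 hx2.le] at h; linarith

private lemma exc_pos {A1 B1 : ℝ} (hA1B1 : A1 ≤ B1) {x : ℝ} (h : 0 < x - cl A1 B1 x) :
    B1 < x ∧ cl A1 B1 x = B1 := by
  rcases lt_or_ge B1 x with hx | hx
  · exact ⟨hx, cl_right hA1B1 hx.le⟩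
  rcases le_or_gt A1 x with hx2 | hx2
  · rw [cl_eq ⟨hx2, hx⟩] at h; linarith
  · rw [cl_left hA1B1 hx2.le] at h; linarith

/-- margin-propagation for one step -/
private lemma stp_margin {f : ℝ × ℝ → ℝ × ℝ} {r lam δ A1 B1 A2 B2 : ℝ} {o : Bool}
    (hA1B1 : A1 ≤ B1) (hA2B2 : A2 ≤ B2) (hr : 0 < r)
    (hδ : 0 < δ) (hδ1 : δ ≤ 1) (hlam : 2 ≤ lam)
    (hedge : ∀ y ∈ Icc (-r) r,
      (o = true → (f (A1,y)).1 ≤ A2 - δ ∧ B2 + δ ≤ (f (B1,y)).1) ∧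
      (o = false → B2 + δ ≤ (f (A1,y)).1 ∧ (f (B1,y)).1 ≤ A2 - δ))
    (w : ℝ × ℝ) (he : w.1 - cl A1 B1 w.1 ≠ 0) :
    min 1 (δ + lam * |w.1 - cl A1 B1 w.1|) ≤
      |(stp f r lam A1 B1 A2 B2 o w).1 - cl A2 B2 (stp f r lam A1 B1 A2 B2 o w).1| := by
  set e := w.1 - cl A1 B1 w.1 with hee
  set y := cl (-r) r w.2 with hy
  have hymem : y ∈ Icc (-r) r := cl_mem (by linarith) _
  have hedgey := hedge y hymem
  rcases lt_or_gt_of_ne he with hneg | hpos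
  · obtain ⟨hx, hcl⟩ := exc_neg hA1B1 hneg
    have heval : e = w.1 - A1 := by rw [hee, hcl]
    have habs : |e| = -e := abs_of_neg hneg
    cases o with
    | true =>
      have hf1 : (f (A1, y)).1 ≤ A2 - δ := (hedgey.1 rfl).1
      -- inner value
      have hW : (stp f r lam A1 B1 A2 B2 true w).1
          = cl (A2-1) (B2+1) ((f (A1,y)).1 + lam * e) := by
        rw [stp_fst, hcl, if_pos rfl, hy, heval]
      have hinner : (f (A1,y)).1 + lam * e ≤ A2 - (δ + lam * |e|) := by
        rw [habs]; nlinarith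
      set inner := (f (A1,y)).1 + lam * e with hin
      have hinB : inner ≤ B2 + 1 := by nlinarith [habs, abs_nonneg e]
      have hXeq : cl (A2-1) (B2+1) inner = max (A2-1) inner := by
        unfold cl
        rw [min_eq_right hinB]
      set X := max (A2-1) inner with hX
      have hXA2 : X ≤ A2 := by
        rw [hX]
        apply max_le (by linarith)
        nlinarith [abs_nonneg e]
      have hclX : cl A2 B2 X = A2 := cl_left hA2B2 hXA2
      rw [hW, hXeq, hclX, abs_of_nonpos (show X - A2 ≤ 0 by linarith)]
      rcases max_choice (A2-1) inner with hc | hc <;> rw [hX, hc]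
      · exact min_le_of_left_le (by linarith)
      · exact min_le_of_right_le (by linarith)
    | false =>
      have hf1 : B2 + δ ≤ (f (A1, y)).1 := (hedgey.2 rfl).1
      have hW : (stp f r lam A1 B1 A2 B2 false w).1
          = cl (A2-1) (B2+1) ((f (A1,y)).1 + (-lam) * e) := by
        rw [stp_fst, hcl, if_neg (by simp : ¬ (false = true)), hy, heval]
      have hinner : B2 + (δ + lam * |e|) ≤ (f (A1,y)).1 + (-lam) * e := by
        rw [habs]; nlinarith
      set inner := (f (A1,y)).1 + (-lam) * e with hin
      have hinA : A2 - 1 ≤ inner := by nlinarith [abs_nonneg e]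
      have hXeq : cl (A2-1) (B2+1) inner = min (B2+1) inner := by
        unfold cl
        exact max_eq_right (le_min (by linarith) hinA)
      set X := min (B2+1) inner with hX
      have hXB2 : B2 ≤ X := by
        rw [hX]
        apply le_min (by linarith)
        nlinarith [abs_nonneg e]
      have hclX : cl A2 B2 X = B2 := cl_right hA2B2 hXB2
      rw [hW, hXeq, hclX, abs_of_nonneg (show (0:ℝ) ≤ X - B2 by linarith)]
      rcases min_choice (B2+1) inner with hc | hc <;> rw [hX, hc]
      · exact min_le_of_left_le (by linarith)
      · exact min_le_of_right_le (by linarith)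
  · obtain ⟨hx, hcl⟩ := exc_pos hA1B1 hpos
    have habs : |e| = e := abs_of_pos hpos
    have heval : e = w.1 - B1 := by rw [hee, hcl]
    cases o with
    | true =>
      have hf1 : B2 + δ ≤ (f (B1, y)).1 := (hedgey.1 rfl).2
      have hW : (stp f r lam A1 B1 A2 B2 true w).1
          = cl (A2-1) (B2+1) ((f (B1,y)).1 + lam * e) := by
        rw [stp_fst, hcl, if_pos rfl, hy, heval]
      have hinner : B2 + (δ + lam * |e|) ≤ (f (B1,y)).1 + lam * e := by
        rw [habs]; nlinarith
      set inner := (f (B1,y)).1 + lam * e with hin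
      have hinA : A2 - 1 ≤ inner := by nlinarith [abs_nonneg e]
      have hXeq : cl (A2-1) (B2+1) inner = min (B2+1) inner := by
        unfold cl
        exact max_eq_right (le_min (by linarith) hinA)
      set X := min (B2+1) inner with hX
      have hXB2 : B2 ≤ X := by
        rw [hX]
        apply le_min (by linarith)
        nlinarith [abs_nonneg e]
      have hclX : cl A2 B2 X = B2 := cl_right hA2B2 hXB2
      rw [hW, hXeq, hclX, abs_of_nonneg (show (0:ℝ) ≤ X - B2 by linarith)]
      rcases min_choice (B2+1) inner with hc | hc <;> rw [hX, hc]
      · exact min_le_of_left_le (by linarith)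
      · exact min_le_of_right_le (by linarith)
    | false =>
      have hf1 : (f (B1, y)).1 ≤ A2 - δ := (hedgey.2 rfl).2
      have hW : (stp f r lam A1 B1 A2 B2 false w).1
          = cl (A2-1) (B2+1) ((f (B1,y)).1 + (-lam) * e) := by
        rw [stp_fst, hcl, if_neg (by simp : ¬ (false = true)), hy, heval]
      have hinner : (f (B1,y)).1 + (-lam) * e ≤ A2 - (δ + lam * |e|) := by
        rw [habs]; nlinarith
      set inner := (f (B1,y)).1 + (-lam) * e with hin
      have hinB : inner ≤ B2 + 1 := by nlinarith [abs_nonneg e]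
      have hXeq : cl (A2-1) (B2+1) inner = max (A2-1) inner := by
        unfold cl
        rw [min_eq_right hinB]
      set X := max (A2-1) inner with hX
      have hXA2 : X ≤ A2 := by
        rw [hX]
        apply max_le (by linarith)
        nlinarith [abs_nonneg e]
      have hclX : cl A2 B2 X = A2 := cl_left hA2B2 hXA2
      rw [hW, hXeq, hclX, abs_of_nonpos (show X - A2 ≤ 0 by linarith)]
      rcases max_choice (A2-1) inner with hc | hc <;> rw [hX, hc]
      · exact min_le_of_left_le (by linarith)
      · exact min_le_of_right_le (by linarith)

/-- extreme edges map exactly to extreme edges -/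
private lemma stp_extreme {f : ℝ × ℝ → ℝ × ℝ} {r lam δ A1 B1 A2 B2 : ℝ} {o : Bool}
    (hA1B1 : A1 ≤ B1) (hA2B2 : A2 ≤ B2) (hr : 0 < r)
    (hδ : 0 < δ) (hδ1 : δ ≤ 1) (hlam : 2 ≤ lam)
    (hedge : ∀ y ∈ Icc (-r) r,
      (o = true → (f (A1,y)).1 ≤ A2 - δ ∧ B2 + δ ≤ (f (B1,y)).1) ∧
      (o = false → B2 + δ ≤ (f (A1,y)).1 ∧ (f (B1,y)).1 ≤ A2 - δ))
    (w : ℝ × ℝ) :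
    (w.1 = A1 - 1 → (stp f r lam A1 B1 A2 B2 o w).1 = if o then A2 - 1 else B2 + 1) ∧
    (w.1 = B1 + 1 → (stp f r lam A1 B1 A2 B2 o w).1 = if o then B2 + 1 else A2 - 1) := by
  set y := cl (-r) r w.2 with hy
  have hymem : y ∈ Icc (-r) r := cl_mem (by linarith) _
  have hedgey := hedge y hymem
  constructor
  · intro hw
    have hcl : cl A1 B1 w.1 = A1 := by rw [hw]; exact cl_left hA1B1 (by linarith)
    have he : w.1 - cl A1 B1 w.1 = -1 := by rw [hcl, hw]; ring
    cases o with
    | true =>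
      have hf1 : (f (A1, y)).1 ≤ A2 - δ := (hedgey.1 rfl).1
      rw [hy] at hf1
      rw [stp_fst, hcl, if_pos rfl, if_pos rfl, hw]
      exact cl_left (by linarith) (by nlinarith)
    | false =>
      have hf1 : B2 + δ ≤ (f (A1, y)).1 := (hedgey.2 rfl).1
      rw [hy] at hf1
      rw [stp_fst, hcl, if_neg (by simp : ¬ (false = true)),
        if_neg (by simp : ¬ (false = true)), hw]
      exact cl_right (by linarith) (by nlinarith)
  · intro hw
    have hcl : cl A1 B1 w.1 = B1 := by rw [hw]; exact cl_right hA1B1 (by linarith)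
    have he : w.1 - cl A1 B1 w.1 = 1 := by rw [hcl, hw]; ring
    cases o with
    | true =>
      have hf1 : B2 + δ ≤ (f (B1, y)).1 := (hedgey.1 rfl).2
      rw [hy] at hf1
      rw [stp_fst, hcl, if_pos rfl, if_pos rfl, hw]
      exact cl_right (by linarith) (by nlinarith)
    | false =>
      have hf1 : (f (B1, y)).1 ≤ A2 - δ := (hedgey.2 rfl).2
      rw [hy] at hf1
      rw [stp_fst, hcl, if_neg (by simp : ¬ (false = true)),
        if_neg (by simp : ¬ (false = true)), hw]
      exact cl_left (by linarith) (by nlinarith)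

/-- a step with no margin activity is the true map -/
private lemma stp_id {f : ℝ × ℝ → ℝ × ℝ} {r lam A1 B1 A2 B2 : ℝ} {o : Bool}
    (hA1B1 : A1 ≤ B1) (hA2B2 : A2 ≤ B2) (hr : 0 < r)
    (hcv : ∀ w' ∈ Icc A1 B1 ×ˢ Icc (-r) r, (f w').1 ∈ Icc A2 B2 → (f w').2 ∈ Ioo (-r) r)
    (w : ℝ × ℝ) (hw2 : w.2 ∈ Icc (-r) r)
    (he : w.1 - cl A1 B1 w.1 = 0)
    (he' : (stp f r lam A1 B1 A2 B2 o w).1 - cl A2 B2 (stp f r lam A1 B1 A2 B2 o w).1 = 0) :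
    stp f r lam A1 B1 A2 B2 o w = f w ∧ w ∈ Icc A1 B1 ×ˢ Icc (-r) r ∧
      (f w).1 ∈ Icc A2 B2 := by
  have hcl1 : cl A1 B1 w.1 = w.1 := by linarith [he]
  have hw1 : w.1 ∈ Icc A1 B1 := hcl1 ▸ cl_mem hA1B1 w.1
  have hwmem : w ∈ Icc A1 B1 ×ˢ Icc (-r) r := ⟨hw1, hw2⟩
  have hpr : (cl A1 B1 w.1, cl (-r) r w.2) = w := by
    rw [hcl1, cl_eq hw2]
  have hstp1 : (stp f r lam A1 B1 A2 B2 o w).1 = cl (A2-1) (B2+1) ((f w).1) := by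
    rw [stp_fst, hpr, he, mul_zero, add_zero]
  have hX : cl (A2-1) (B2+1) ((f w).1) ∈ Icc A2 B2 := by
    have h1 := he'
    rw [hstp1] at h1
    have := cl_mem (show A2 ≤ B2 from hA2B2) (cl (A2-1) (B2+1) ((f w).1))
    have h2 : cl A2 B2 (cl (A2-1) (B2+1) ((f w).1)) = cl (A2-1) (B2+1) ((f w).1) := by
      linarith [h1]
    rw [← h2]
    exact this
  have hfX : (f w).1 = cl (A2-1) (B2+1) ((f w).1) := by
    rcases lt_or_ge ((f w).1) (A2-1) with hc | hc
    · exfalso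
      rw [cl_left (by linarith) hc.le] at hX
      linarith [hX.1]
    rcases le_or_gt ((f w).1) (B2+1) with hc2 | hc2
    · rw [cl_eq ⟨hc, hc2⟩]
    · exfalso
      rw [cl_right (by linarith) hc2.le] at hX
      linarith [hX.2]
  have hf1 : (f w).1 ∈ Icc A2 B2 := by rw [hfX]; exact hX
  have hf2 : (f w).2 ∈ Ioo (-r) r := hcv w hwmem hf1
  refine ⟨?_, hwmem, hf1⟩
  have h2 : (stp f r lam A1 B1 A2 B2 o w).2 = (f w).2 := by
    rw [stp_snd, hpr, cl_eq ⟨hf2.1.le, hf2.2.le⟩]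
  rw [Prod.ext_iff]
  refine ⟨?_, h2⟩
  rw [hstp1, ← hfX]


/-- the clamped expansive chain -/
private def chn (f : ℝ × ℝ → ℝ × ℝ) (r lam : ℝ) (α β' : ℕ → ℝ) (oo : ℕ → Bool) :
    ℕ → (ℝ × ℝ) → ℝ × ℝ
  | 0 => fun z => z
  | (k+1) => fun z => stp f r lam (α k) (β' k) (α (k+1)) (β' (k+1)) (oo k)
      (chn f r lam α β' oo k z)

private lemma chn_succ (f : ℝ × ℝ → ℝ × ℝ) (r lam : ℝ) (α β' : ℕ → ℝ) (oo : ℕ → Bool)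
    (k : ℕ) (z : ℝ × ℝ) :
    chn f r lam α β' oo (k+1) z
      = stp f r lam (α k) (β' k) (α (k+1)) (β' (k+1)) (oo k) (chn f r lam α β' oo k z) := rfl

/-- orientation parity -/
private def par (oo : ℕ → Bool) : ℕ → Bool
  | 0 => true
  | (k+1) => (par oo k == oo k)

private lemma chn_cont {f : ℝ × ℝ → ℝ × ℝ} (hf : Continuous f) (r lam : ℝ)
    (α β' : ℕ → ℝ) (oo : ℕ → Bool) (k : ℕ) : Continuous (chn f r lam α β' oo k) := by
  induction k with
  | zero => exact continuous_id
  | succ k ih => exact (stp_cont hf _ _ _ _ _ _ _).comp ih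

private lemma chn_box {f : ℝ × ℝ → ℝ × ℝ} {r lam : ℝ} {α β' : ℕ → ℝ} {oo : ℕ → Bool}
    (hαβ : ∀ k, α k ≤ β' k) (hr : 0 < r) {z : ℝ × ℝ}
    (hz1 : z.1 ∈ Icc (α 0 - 1) (β' 0 + 1)) (hz2 : z.2 ∈ Icc (-r) r) (k : ℕ) :
    (chn f r lam α β' oo k z).1 ∈ Icc (α k - 1) (β' k + 1) ∧
    (chn f r lam α β' oo k z).2 ∈ Icc (-r) r := by
  induction k with
  | zero => exact ⟨hz1, hz2⟩
  | succ k ih =>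
    rw [chn_succ]
    exact stp_box (hαβ (k+1)) hr _

private lemma par_succ (oo : ℕ → Bool) (k : ℕ) : par oo (k+1) = (par oo k == oo k) := rfl

private lemma chn_extreme {f : ℝ × ℝ → ℝ × ℝ} {r lam δ : ℝ} {α β' : ℕ → ℝ} {oo : ℕ → Bool}
    (hαβ : ∀ k, α k ≤ β' k) (hr : 0 < r) (hδ : 0 < δ) (hδ1 : δ ≤ 1) (hlam : 2 ≤ lam)
    (hedge : ∀ k, ∀ y ∈ Icc (-r) r,
      (oo k = true → (f (α k,y)).1 ≤ α (k+1) - δ ∧ β' (k+1) + δ ≤ (f (β' k,y)).1) ∧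
      (oo k = false → β' (k+1) + δ ≤ (f (α k,y)).1 ∧ (f (β' k,y)).1 ≤ α (k+1) - δ))
    {z : ℝ × ℝ} (k : ℕ) :
    (z.1 = α 0 - 1 →
      (chn f r lam α β' oo k z).1 = if par oo k then α k - 1 else β' k + 1) ∧
    (z.1 = β' 0 + 1 →
      (chn f r lam α β' oo k z).1 = if par oo k then β' k + 1 else α k - 1) := by
  have hfneg : ¬ ((false : Bool) = true) := by simp
  induction k with
  | zero =>
    constructor
    · intro h
      have hp : par oo 0 = true := rfl
      rw [hp, if_pos rfl]
      exact h
    · intro h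
      have hp : par oo 0 = true := rfl
      rw [hp, if_pos rfl]
      exact h
  | succ k ih =>
    have hext := stp_extreme (f := f) (r := r) (lam := lam) (δ := δ)
      (hαβ k) (hαβ (k+1)) hr hδ hδ1 hlam (hedge k) (chn f r lam α β' oo k z)
    constructor
    · intro h
      have h1 := ih.1 h
      rw [chn_succ]
      rcases Bool.dichotomy (par oo k) with hp | hp
      · rw [hp, if_neg hfneg] at h1
        have h2 := hext.2 h1
        rcases Bool.dichotomy (oo k) with ho | ho
        · rw [ho, if_neg hfneg] at h2
          rw [ho, h2, par_succ, hp, ho]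
          simp
        · rw [ho, if_pos rfl] at h2
          rw [ho, h2, par_succ, hp, ho]
          simp
      · rw [hp, if_pos rfl] at h1
        have h2 := hext.1 h1
        rcases Bool.dichotomy (oo k) with ho | ho
        · rw [ho, if_neg hfneg] at h2
          rw [ho, h2, par_succ, hp, ho]
          simp
        · rw [ho, if_pos rfl] at h2
          rw [ho, h2, par_succ, hp, ho]
          simp
    · intro h
      have h1 := ih.2 h
      rw [chn_succ]
      rcases Bool.dichotomy (par oo k) with hp | hp
      · rw [hp, if_neg hfneg] at h1
        have h2 := hext.1 h1
        rcases Bool.dichotomy (oo k) with ho | ho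
        · rw [ho, if_neg hfneg] at h2
          rw [ho, h2, par_succ, hp, ho]
          simp
        · rw [ho, if_pos rfl] at h2
          rw [ho, h2, par_succ, hp, ho]
          simp
      · rw [hp, if_pos rfl] at h1
        have h2 := hext.2 h1
        rcases Bool.dichotomy (oo k) with ho | ho
        · rw [ho, if_neg hfneg] at h2
          rw [ho, h2, par_succ, hp, ho]
          simp
        · rw [ho, if_pos rfl] at h2
          rw [ho, h2, par_succ, hp, ho]
          simp

private lemma chn_step_margin {f : ℝ × ℝ → ℝ × ℝ} {r lam δ : ℝ} {α β' : ℕ → ℝ} {oo : ℕ → Bool}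
    (hαβ : ∀ k, α k ≤ β' k) (hr : 0 < r) (hδ : 0 < δ) (hδ1 : δ ≤ 1) (hlam : 2 ≤ lam)
    (hedge : ∀ k, ∀ y ∈ Icc (-r) r,
      (oo k = true → (f (α k,y)).1 ≤ α (k+1) - δ ∧ β' (k+1) + δ ≤ (f (β' k,y)).1) ∧
      (oo k = false → β' (k+1) + δ ≤ (f (α k,y)).1 ∧ (f (β' k,y)).1 ≤ α (k+1) - δ))
    (z : ℝ × ℝ) (k : ℕ)
    (he : (chn f r lam α β' oo k z).1 - cl (α k) (β' k) (chn f r lam α β' oo k z).1 ≠ 0) :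
    min 1 (δ + lam * |(chn f r lam α β' oo k z).1
        - cl (α k) (β' k) (chn f r lam α β' oo k z).1|) ≤
      |(chn f r lam α β' oo (k+1) z).1
        - cl (α (k+1)) (β' (k+1)) (chn f r lam α β' oo (k+1) z).1| := by
  rw [chn_succ]
  exact stp_margin (hαβ k) (hαβ (k+1)) hr hδ hδ1 hlam (hedge k) _ he

private lemma chn_prop {f : ℝ × ℝ → ℝ × ℝ} {r lam δ : ℝ} {α β' : ℕ → ℝ} {oo : ℕ → Bool}
    (hαβ : ∀ k, α k ≤ β' k) (hr : 0 < r) (hδ : 0 < δ) (hδ1 : δ ≤ 1) (hlam : 2 ≤ lam)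
    (hedge : ∀ k, ∀ y ∈ Icc (-r) r,
      (oo k = true → (f (α k,y)).1 ≤ α (k+1) - δ ∧ β' (k+1) + δ ≤ (f (β' k,y)).1) ∧
      (oo k = false → β' (k+1) + δ ≤ (f (α k,y)).1 ∧ (f (β' k,y)).1 ≤ α (k+1) - δ))
    (z : ℝ × ℝ) (k : ℕ)
    (he : (chn f r lam α β' oo k z).1 - cl (α k) (β' k) (chn f r lam α β' oo k z).1 ≠ 0)
    (m : ℕ) :
    δ ≤ |(chn f r lam α β' oo (k+m+1) z).1
        - cl (α (k+m+1)) (β' (k+m+1)) (chn f r lam α β' oo (k+m+1) z).1| := by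
  induction m with
  | zero =>
    have h1 := chn_step_margin hαβ hr hδ hδ1 hlam hedge z k he
    have h2 : δ ≤ min 1 (δ + lam * |(chn f r lam α β' oo k z).1
        - cl (α k) (β' k) (chn f r lam α β' oo k z).1|) := by
      apply le_min hδ1
      nlinarith [abs_nonneg ((chn f r lam α β' oo k z).1
        - cl (α k) (β' k) (chn f r lam α β' oo k z).1)]
    exact le_trans h2 h1
  | succ m ih =>
    have hne : (chn f r lam α β' oo (k+m+1) z).1
        - cl (α (k+m+1)) (β' (k+m+1)) (chn f r lam α β' oo (k+m+1) z).1 ≠ 0 := by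
      intro h0
      rw [h0] at ih
      simp at ih
      linarith
    have h1 := chn_step_margin hαβ hr hδ hδ1 hlam hedge z (k+m+1) hne
    have h2 : δ ≤ min 1 (δ + lam * |(chn f r lam α β' oo (k+m+1) z).1
        - cl (α (k+m+1)) (β' (k+m+1)) (chn f r lam α β' oo (k+m+1) z).1|) := by
      apply le_min hδ1
      nlinarith [abs_nonneg ((chn f r lam α β' oo (k+m+1) z).1
        - cl (α (k+m+1)) (β' (k+m+1)) (chn f r lam α β' oo (k+m+1) z).1)]
    have : k + (m+1) + 1 = (k+m+1) + 1 := by omega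
    rw [this]
    exact le_trans h2 h1

/-- clamping into the half-margin interval controls the excess -/
private lemma cl_abs_le {p q c x : ℝ} (hpq : p ≤ q) (hc : 0 ≤ c) :
    |cl (p - c) (q + c) x - cl p q (cl (p - c) (q + c) x)| ≤ c ∧
    |cl (p - c) (q + c) x - cl p q (cl (p - c) (q + c) x)| ≤ |x - cl p q x| := by
  rcases lt_or_ge x p with h1 | h1
  · have hcx : cl p q x = p := cl_left hpq h1.le
    rcases lt_or_ge x (p - c) with h2 | h2
    · have h3 : cl (p-c) (q+c) x = p - c := cl_left (by linarith) h2.le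
      have h4 : cl p q (p - c) = p := cl_left hpq (by linarith)
      rw [h3, h4, hcx]
      constructor
      · rw [abs_of_nonpos (by linarith)]; linarith
      · rw [abs_of_nonpos (by linarith), abs_of_nonpos (by linarith)]; linarith
    · have h3 : cl (p-c) (q+c) x = x := cl_eq ⟨h2, by linarith⟩
      rw [h3, hcx]
      constructor
      · rw [abs_of_nonpos (by linarith)]; linarith
      · exact le_refl _
  rcases le_or_gt x q with h1' | h1'
  · have h3 : cl (p-c) (q+c) x = x := cl_eq ⟨by linarith, by linarith⟩
    have hcx : cl p q x = x := cl_eq ⟨h1, h1'⟩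
    rw [h3, hcx]
    simp [hc]
  · have hcx : cl p q x = q := cl_right hpq h1'.le
    rcases lt_or_ge (q + c) x with h2 | h2
    · have h3 : cl (p-c) (q+c) x = q + c := cl_right (by linarith) h2.le
      have h4 : cl p q (q + c) = q := cl_right hpq (by linarith)
      rw [h3, h4, hcx]
      constructor
      · rw [abs_of_nonneg (by linarith)]; linarith
      · rw [abs_of_nonneg (by linarith), abs_of_nonneg (by linarith)]; linarith
    · have h3 : cl (p-c) (q+c) x = x := cl_eq ⟨by linarith, h2⟩
      rw [h3, hcx]
      constructor
      · rw [abs_of_nonneg (by linarith)]; linarith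
      · exact le_refl _

/-- a Miranda zero of the chain is a genuine orbit -/
private lemma chn_zero {f : ℝ × ℝ → ℝ × ℝ} {r lam δ : ℝ} {α β' : ℕ → ℝ} {oo : ℕ → Bool}
    (hαβ : ∀ k, α k ≤ β' k) (hr : 0 < r) (hδ : 0 < δ) (hδ1 : δ ≤ 1) (hlam : 2 ≤ lam)
    (hlamδ : 1 ≤ lam * δ)
    (hedge : ∀ k, ∀ y ∈ Icc (-r) r,
      (oo k = true → (f (α k,y)).1 ≤ α (k+1) - δ ∧ β' (k+1) + δ ≤ (f (β' k,y)).1) ∧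
      (oo k = false → β' (k+1) + δ ≤ (f (α k,y)).1 ∧ (f (β' k,y)).1 ≤ α (k+1) - δ))
    (hcv : ∀ k, ∀ w' ∈ Icc (α k) (β' k) ×ˢ Icc (-r) r,
       (f w').1 ∈ Icc (α (k+1)) (β' (k+1)) → (f w').2 ∈ Ioo (-r) r)
    (n : ℕ) (hn : 1 ≤ n) (hα : α n = α 0) (hβ : β' n = β' 0)
    (z : ℝ × ℝ) (hz1 : z.1 ∈ Icc (α 0 - 1) (β' 0 + 1)) (hz2 : z.2 ∈ Icc (-r) r)
    (hu : (chn f r lam α β' oo n z).1 = cl (α 0 - 2⁻¹) (β' 0 + 2⁻¹) z.1)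
    (hv : (chn f r lam α β' oo n z).2 = z.2) :
    (∀ k, k < n → chn f r lam α β' oo (k+1) z = f (chn f r lam α β' oo k z) ∧
       chn f r lam α β' oo k z ∈ Icc (α k) (β' k) ×ˢ Icc (-r) r) ∧
    chn f r lam α β' oo n z = z := by
  set E : ℕ → ℝ := fun k => (chn f r lam α β' oo k z).1
    - cl (α k) (β' k) (chn f r lam α β' oo k z).1 with hE
  have hEa : ∀ k, E k = (chn f r lam α β' oo k z).1
      - cl (α k) (β' k) (chn f r lam α β' oo k z).1 := fun k => rfl
  have hE0 : E 0 = z.1 - cl (α 0) (β' 0) z.1 := rfl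
  have habs := cl_abs_le (p := α 0) (q := β' 0) (c := 2⁻¹) (hαβ 0) (by norm_num) (x := z.1)
  have hEn : E n = cl (α 0 - 2⁻¹) (β' 0 + 2⁻¹) z.1
      - cl (α 0) (β' 0) (cl (α 0 - 2⁻¹) (β' 0 + 2⁻¹) z.1) := by
    rw [hEa, hu, hα, hβ]
  have hEn1 : |E n| ≤ 2⁻¹ := by rw [hEn]; exact habs.1
  have hEn2 : |E n| ≤ |E 0| := by rw [hEn, hE0]; exact habs.2
  -- Step A : no initial margin
  have hA : E 0 = 0 := by
    by_contra h0
    have hq : min δ |E 0| ≤ |E (n-1)| ∧ E (n-1) ≠ 0 := by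
      rcases n with _ | m
      · omega
      rcases m with _ | m'
      · exact ⟨min_le_right _ _, h0⟩
      · have hp := chn_prop hαβ hr hδ hδ1 hlam hedge z 0 h0 m'
        have he : (0 + m' + 1) = (m' + 2) - 1 := by omega
        rw [he] at hp
        refine ⟨le_trans (min_le_left _ _) (by rw [hEa]; exact hp), ?_⟩
        intro hz
        rw [hEa] at hz
        rw [hz] at hp
        simp at hp
        linarith
    have hne := hq.2
    rw [hEa] at hne
    have hfin := chn_step_margin hαβ hr hδ hδ1 hlam hedge z (n-1) hne
    have hsucc : n - 1 + 1 = n := by omega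
    rw [hsucc] at hfin
    rw [← hEa, ← hEa] at hfin
    set Q := |E (n-1)| with hQ
    rcases le_total 1 (δ + lam * Q) with hc | hc
    · rw [min_eq_left hc] at hfin
      norm_num at hEn1
      linarith
    · rw [min_eq_right hc] at hfin
      rcases le_total δ |E 0| with hd | hd
      · have hQδ : δ ≤ Q := by
          have := hq.1; rw [min_eq_left hd] at this; exact this
        nlinarith [hEn1]
      · have hQδ : |E 0| ≤ Q := by
          have := hq.1; rw [min_eq_right hd] at this; exact this
        have hpos : 0 < |E 0| := abs_pos.mpr h0
        nlinarith [hEn2]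
  -- Step B : no margin at all
  have hz1' : z.1 ∈ Icc (α 0) (β' 0) := by
    have h1 : cl (α 0) (β' 0) z.1 = z.1 := by
      have := hE0; rw [hA] at this; linarith [this]
    rw [← h1]
    exact cl_mem (hαβ 0) _
  have hψid : cl (α 0 - 2⁻¹) (β' 0 + 2⁻¹) z.1 = z.1 :=
    cl_eq ⟨by linarith [hz1'.1], by linarith [hz1'.2]⟩
  have hEn0 : E n = 0 := by
    rw [hEn, hψid]
    rw [hE0] at hA
    exact hA
  have hB : ∀ k, k ≤ n → E k = 0 := by
    intro k hk
    rcases eq_or_lt_of_le hk with he | hlt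
    · rw [he]; exact hEn0
    rcases Nat.eq_zero_or_pos k with h0 | h0
    · rw [h0]; exact hA
    by_contra hke
    obtain ⟨m, hm⟩ : ∃ m, n = k + m + 1 := ⟨n - k - 1, by omega⟩
    rw [hEa] at hke
    have hp := chn_prop hαβ hr hδ hδ1 hlam hedge z k hke m
    rw [← hEa, ← hm, hEn0] at hp
    simp at hp
    linarith
  -- Step C : genuine orbit
  have hC : ∀ k, k < n → chn f r lam α β' oo (k+1) z = f (chn f r lam α β' oo k z) ∧
      chn f r lam α β' oo k z ∈ Icc (α k) (β' k) ×ˢ Icc (-r) r := by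
    intro k hk
    have hbox := chn_box (f := f) (lam := lam) (oo := oo) hαβ hr hz1 hz2 k
    have hek : E k = 0 := hB k hk.le
    have hek1 : E (k+1) = 0 := hB (k+1) hk
    rw [hEa] at hek hek1
    rw [chn_succ] at hek1 ⊢
    have := stp_id (lam := lam) (o := oo k) (hαβ k) (hαβ (k+1)) hr (hcv k)
      (chn f r lam α β' oo k z) hbox.2 hek hek1
    exact ⟨this.1, this.2.1⟩
  refine ⟨hC, ?_⟩
  have h1 : (chn f r lam α β' oo n z).1 = z.1 := by rw [hu, hψid]
  exact Prod.ext h1 hv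


end

/-- The h-set `[a,b] × [-r,r] ⊂ ℝ²`. -/
def HSet (a b r : ℝ) : Set (ℝ × ℝ) := Set.Icc a b ×ˢ Set.Icc (-r) r

/-- Left edge `{a} × [-r,r]`. -/
def LeftEdge (a r : ℝ) : Set (ℝ × ℝ) := ({a} : Set ℝ) ×ˢ Set.Icc (-r) r

/-- Right edge `{b} × [-r,r]`. -/
def RightEdge (b r : ℝ) : Set (ℝ × ℝ) := ({b} : Set ℝ) ×ˢ Set.Icc (-r) r

/-- Horizontal boundary `[a,b] × {-r,r}`. -/
def HorizBdry (a b r : ℝ) : Set (ℝ × ℝ) := Set.Icc a b ×ˢ ({-r, r} : Set ℝ)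

/-- Left side `(-∞,a) × ℝ`. -/
def LeftSide (a : ℝ) : Set (ℝ × ℝ) := Set.Iio a ×ˢ (Set.univ : Set ℝ)

/-- Right side `(b,∞) × ℝ`. -/
def RightSide (b : ℝ) : Set (ℝ × ℝ) := Set.Ioi b ×ˢ (Set.univ : Set ℝ)

/-- `N₀ = [a₀,b₀] × [-r,r]` `g`-covers `N₁ = [a₁,b₁] × [-r,r]` horizontally. -/
def CoversH (g : ℝ × ℝ → ℝ × ℝ) (a₀ b₀ a₁ b₁ r : ℝ) : Prop :=
  g '' HSet a₀ b₀ r ⊆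
      (LeftSide a₁ ∪ HSet a₁ b₁ r ∪ RightSide b₁) \ HorizBdry a₁ b₁ r ∧
  ((g '' LeftEdge a₀ r ⊆ LeftSide a₁ ∧ g '' RightEdge b₀ r ⊆ RightSide b₁) ∨
   (g '' LeftEdge a₀ r ⊆ RightSide b₁ ∧ g '' RightEdge b₀ r ⊆ LeftSide a₁))


/-- A topological horseshoe on two disjoint h-sets yields periodic points of
every least period `n ≥ 1`. -/
theorem stmt_9 (f : ℝ × ℝ → ℝ × ℝ) (hf : Continuous f)
    (a b : Fin 2 → ℝ) (r : ℝ) (hr : 0 < r) (hab : ∀ i, a i ≤ b i)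
    (hdisj : Disjoint (HSet (a 0) (b 0) r) (HSet (a 1) (b 1) r))
    (hcov : ∀ i j : Fin 2, CoversH f (a i) (b i) (a j) (b j) r) :
    ∀ n : ℕ, 1 ≤ n → ∃ x : ℝ × ℝ, Function.minimalPeriod f x = n := by
  intro n hn
  classical
  -- the itinerary 0,1,1,...,1 (least period n)
  set ι : ℕ → Fin 2 := fun k => if k % n = 0 then 0 else 1 with hι
  have hι0 : ι 0 = 0 := by simp [hι]
  have hιn : ι n = 0 := by simp [hι, Nat.mod_self]
  have hιlt : ∀ m, 0 < m → m < n → ι m = 1 := by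
    intro m h1 h2
    rw [hι]
    simp only
    rw [Nat.mod_eq_of_lt h2, if_neg (by omega)]
  -- orientation and uniform edge-crossing margins from the covering relations
  have pair : ∀ i j : Fin 2, ∃ o : Bool, ∃ d : ℝ, 0 < d ∧ ∀ y ∈ Icc (-r) r,
      (o = true → (f (a i, y)).1 ≤ a j - d ∧ b j + d ≤ (f (b i, y)).1) ∧
      (o = false → b j + d ≤ (f (a i, y)).1 ∧ (f (b i, y)).1 ≤ a j - d) := by
    intro i j
    have hIK : IsCompact (Icc (-r) r) := isCompact_Icc
    have hIne : (Icc (-r) r).Nonempty := ⟨0, by constructor <;> linarith⟩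
    have hcL : Continuous (fun y : ℝ => (f (a i, y)).1) :=
      continuous_fst.comp (hf.comp (continuous_const.prodMk continuous_id))
    have hcR : Continuous (fun y : ℝ => (f (b i, y)).1) :=
      continuous_fst.comp (hf.comp (continuous_const.prodMk continuous_id))
    have hLmem : ∀ y ∈ Icc (-r) r, (a i, y) ∈ LeftEdge (a i) r :=
      fun y hy => ⟨Set.mem_singleton _, hy⟩
    have hRmem : ∀ y ∈ Icc (-r) r, (b i, y) ∈ RightEdge (b i) r :=
      fun y hy => ⟨Set.mem_singleton _, hy⟩
    rcases (hcov i j).2 with ⟨hL, hR⟩ | ⟨hL, hR⟩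
    · -- orientation preserving
      obtain ⟨y1, hy1m, hy1⟩ := hIK.exists_isMaxOn hIne hcL.continuousOn
      obtain ⟨y2, hy2m, hy2⟩ := hIK.exists_isMinOn hIne hcR.continuousOn
      have h1 : (f (a i, y1)).1 < a j := (hL (Set.mem_image_of_mem f (hLmem y1 hy1m))).1
      have h2 : b j < (f (b i, y2)).1 := (hR (Set.mem_image_of_mem f (hRmem y2 hy2m))).1
      refine ⟨true, min (a j - (f (a i, y1)).1) ((f (b i, y2)).1 - b j),
        lt_min (by linarith) (by linarith), ?_⟩
      intro y hy
      refine ⟨fun _ => ⟨?_, ?_⟩, fun hc => by simp at hc⟩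
      · have := hy1 hy
        have hm : min (a j - (f (a i, y1)).1) ((f (b i, y2)).1 - b j)
            ≤ a j - (f (a i, y1)).1 := min_le_left _ _
        simp only [Set.mem_setOf_eq] at this
        linarith
      · have := hy2 hy
        have hm : min (a j - (f (a i, y1)).1) ((f (b i, y2)).1 - b j)
            ≤ (f (b i, y2)).1 - b j := min_le_right _ _
        simp only [Set.mem_setOf_eq] at this
        linarith
    · -- orientation reversing
      obtain ⟨y1, hy1m, hy1⟩ := hIK.exists_isMinOn hIne hcL.continuousOn
      obtain ⟨y2, hy2m, hy2⟩ := hIK.exists_isMaxOn hIne hcR.continuousOn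
      have h1 : b j < (f (a i, y1)).1 := (hL (Set.mem_image_of_mem f (hLmem y1 hy1m))).1
      have h2 : (f (b i, y2)).1 < a j := (hR (Set.mem_image_of_mem f (hRmem y2 hy2m))).1
      refine ⟨false, min ((f (a i, y1)).1 - b j) (a j - (f (b i, y2)).1),
        lt_min (by linarith) (by linarith), ?_⟩
      intro y hy
      refine ⟨fun hc => by simp at hc, fun _ => ⟨?_, ?_⟩⟩
      · have := hy1 hy
        have hm : min ((f (a i, y1)).1 - b j) (a j - (f (b i, y2)).1)
            ≤ (f (a i, y1)).1 - b j := min_le_left _ _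
        simp only [Set.mem_setOf_eq] at this
        linarith
      · have := hy2 hy
        have hm : min ((f (a i, y1)).1 - b j) (a j - (f (b i, y2)).1)
            ≤ a j - (f (b i, y2)).1 := min_le_right _ _
        simp only [Set.mem_setOf_eq] at this
        linarith
  choose ob dd hdd hprop using pair
  set δ : ℝ := min 1 (min (min (dd 0 0) (dd 0 1)) (min (dd 1 0) (dd 1 1))) with hδdef
  have hδpos : 0 < δ :=
    lt_min one_pos (lt_min (lt_min (hdd 0 0) (hdd 0 1)) (lt_min (hdd 1 0) (hdd 1 1)))
  have hδ1 : δ ≤ 1 := min_le_left _ _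
  have hδle : ∀ i j : Fin 2, δ ≤ dd i j := by
    intro i j
    fin_cases i <;> fin_cases j
    · exact le_trans (min_le_right _ _) (le_trans (min_le_left _ _) (min_le_left _ _))
    · exact le_trans (min_le_right _ _) (le_trans (min_le_left _ _) (min_le_right _ _))
    · exact le_trans (min_le_right _ _) (le_trans (min_le_right _ _) (min_le_left _ _))
    · exact le_trans (min_le_right _ _) (le_trans (min_le_right _ _) (min_le_right _ _))
  set lam : ℝ := 2 + 1/δ with hlamdef
  have hlam : 2 ≤ lam := by
    rw [hlamdef]
    have : 0 < 1/δ := by positivity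
    linarith
  have hlamδ : 1 ≤ lam * δ := by
    rw [hlamdef]
    field_simp
    nlinarith [hδpos]
  set α : ℕ → ℝ := fun k => a (ι k) with hαdef
  set β' : ℕ → ℝ := fun k => b (ι k) with hβdef
  set oo : ℕ → Bool := fun k => ob (ι k) (ι (k+1)) with hoodef
  have hαβ : ∀ k, α k ≤ β' k := fun k => hab _
  have hαn : α n = α 0 := by rw [hαdef]; simp only [hιn, hι0]
  have hβn : β' n = β' 0 := by rw [hβdef]; simp only [hιn, hι0]
  have hedge : ∀ k, ∀ y ∈ Icc (-r) r,
      (oo k = true → (f (α k,y)).1 ≤ α (k+1) - δ ∧ β' (k+1) + δ ≤ (f (β' k,y)).1) ∧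
      (oo k = false → β' (k+1) + δ ≤ (f (α k,y)).1 ∧ (f (β' k,y)).1 ≤ α (k+1) - δ) := by
    intro k y hy
    have h1 := hprop (ι k) (ι (k+1)) y hy
    have h2 := hδle (ι k) (ι (k+1))
    constructor
    · intro ho
      obtain ⟨ha1, hb1⟩ := h1.1 ho
      exact ⟨by linarith, by linarith⟩
    · intro ho
      obtain ⟨ha1, hb1⟩ := h1.2 ho
      exact ⟨by linarith, by linarith⟩
  have hcv : ∀ k, ∀ w' ∈ Icc (α k) (β' k) ×ˢ Icc (-r) r,
      (f w').1 ∈ Icc (α (k+1)) (β' (k+1)) → (f w').2 ∈ Ioo (-r) r := by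
    intro k w' hw' hf1
    have himg := (hcov (ι k) (ι (k+1))).1
      (Set.mem_image_of_mem f (show w' ∈ HSet (a (ι k)) (b (ι k)) r from hw'))
    obtain ⟨hun, hnb⟩ := himg
    rcases hun with (hl | hh) | hr2
    · exfalso
      have := hl.1
      rw [Set.mem_Iio] at this
      have := hf1.1
      simp only [hαdef] at this
      linarith
    · have h2 : (f w').2 ∈ Icc (-r) r := hh.2
      have hne2 : (f w').2 ∉ ({-r, r} : Set ℝ) := by
        intro hc
        exact hnb ⟨hf1, hc⟩
      have hne2' : (f w').2 ≠ -r := fun hc => hne2 (by rw [hc]; left; rfl)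
      have hne2'' : (f w').2 ≠ r := fun hc => hne2 (by rw [hc]; right; rfl)
      exact ⟨lt_of_le_of_ne h2.1 (Ne.symm hne2'), lt_of_le_of_ne h2.2 hne2''⟩
    · exfalso
      have := hr2.1
      rw [Set.mem_Ioi] at this
      have := hf1.2
      simp only [hβdef] at this
      linarith
  -- the Miranda data
  have hABlt : α 0 - 1 < β' 0 + 1 := by linarith [hαβ 0]
  have hCDlt : (-r : ℝ) < r := by linarith
  have hchc := chn_cont hf r lam α β' oo n
  have hucont : Continuous (fun z : ℝ × ℝ =>
      (chn f r lam α β' oo n z).1 - cl (α 0 - 2⁻¹) (β' 0 + 2⁻¹) z.1) :=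
    (continuous_fst.comp hchc).sub ((cl_cont _ _).comp continuous_fst)
  have hvcont : Continuous (fun z : ℝ × ℝ => z.2 - (chn f r lam α β' oo n z).2) :=
    continuous_snd.sub (continuous_snd.comp hchc)
  -- boundary values of u
  have hextL : ∀ y : ℝ, (chn f r lam α β' oo n ((α 0 - 1 : ℝ), y)).1
      = if par oo n then α 0 - 1 else β' 0 + 1 := by
    intro y
    have h := (chn_extreme (f := f) (lam := lam) hαβ hr hδpos hδ1 hlam hedge
      (z := ((α 0 - 1 : ℝ), y)) n).1 rfl
    rw [h, hαn, hβn]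
  have hextR : ∀ y : ℝ, (chn f r lam α β' oo n ((β' 0 + 1 : ℝ), y)).1
      = if par oo n then β' 0 + 1 else α 0 - 1 := by
    intro y
    have h := (chn_extreme (f := f) (lam := lam) hαβ hr hδpos hδ1 hlam hedge
      (z := ((β' 0 + 1 : ℝ), y)) n).2 rfl
    rw [h, hαn, hβn]
  have hclL : cl (α 0 - 2⁻¹) (β' 0 + 2⁻¹) (α 0 - 1) = α 0 - 2⁻¹ :=
    cl_left (by linarith [hαβ 0]) (by linarith)
  have hclR : cl (α 0 - 2⁻¹) (β' 0 + 2⁻¹) (β' 0 + 1) = β' 0 + 2⁻¹ :=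
    cl_right (by linarith [hαβ 0]) (by linarith)
  have hvB : ∀ x ∈ Icc (α 0 - 1) (β' 0 + 1),
      (fun z : ℝ × ℝ => z.2 - (chn f r lam α β' oo n z).2) (x, -r) ≤ 0 := by
    intro x hx
    have hb := (chn_box (f := f) (lam := lam) (oo := oo) hαβ hr
      (z := (x, -r)) hx (by constructor <;> simp [hr.le]) n).2
    simp only
    linarith [hb.1]
  have hvT : ∀ x ∈ Icc (α 0 - 1) (β' 0 + 1),
      0 ≤ (fun z : ℝ × ℝ => z.2 - (chn f r lam α β' oo n z).2) (x, r) := by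
    intro x hx
    have hb := (chn_box (f := f) (lam := lam) (oo := oo) hαβ hr
      (z := (x, r)) hx (by constructor <;> simp [hr.le]) n).2
    simp only
    linarith [hb.2]
  -- apply Miranda (orientation depends on the total parity)
  have key : ∃ p ∈ Icc (α 0 - 1) (β' 0 + 1) ×ˢ Icc (-r) r,
      (chn f r lam α β' oo n p).1 = cl (α 0 - 2⁻¹) (β' 0 + 2⁻¹) p.1 ∧
      (chn f r lam α β' oo n p).2 = p.2 := by
    rcases Bool.dichotomy (par oo n) with hP | hP
    · -- parity false : u > 0 on the left face, use -u
      obtain ⟨p, hpm, h1, h2⟩ := miranda (α 0 - 1) (β' 0 + 1) (-r) r hABlt hCDlt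
        (fun z => -((chn f r lam α β' oo n z).1 - cl (α 0 - 2⁻¹) (β' 0 + 2⁻¹) z.1))
        (fun z => z.2 - (chn f r lam α β' oo n z).2)
        hucont.neg hvcont
        (by
          intro y hy
          simp only
          rw [hextL y, hP, hclL]
          norm_num
          linarith [hαβ 0])
        (by
          intro y hy
          simp only
          rw [hextR y, hP, hclR]
          norm_num
          linarith [hαβ 0])
        hvB hvT
      refine ⟨p, hpm, by linarith [neg_eq_zero.mp h1], by linarith [h2]⟩
    · obtain ⟨p, hpm, h1, h2⟩ := miranda (α 0 - 1) (β' 0 + 1) (-r) r hABlt hCDlt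
        (fun z => (chn f r lam α β' oo n z).1 - cl (α 0 - 2⁻¹) (β' 0 + 2⁻¹) z.1)
        (fun z => z.2 - (chn f r lam α β' oo n z).2)
        hucont hvcont
        (by
          intro y hy
          simp only
          rw [hextL y, hP, hclL]
          norm_num)
        (by
          intro y hy
          simp only
          rw [hextR y, hP, hclR]
          norm_num)
        hvB hvT
      refine ⟨p, hpm, by linarith [h1], by linarith [h2]⟩
  obtain ⟨p, hpm, hu', hv'⟩ := key
  obtain ⟨horb, hfix⟩ := chn_zero hαβ hr hδpos hδ1 hlam hlamδ hedge hcv n hn hαn hβn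
    p hpm.1 hpm.2 hu' hv'
  -- the true orbit
  have hiter : ∀ k, k ≤ n → f^[k] p = chn f r lam α β' oo k p := by
    intro k
    induction k with
    | zero => intro _; rfl
    | succ k ih =>
      intro hk
      have hk' : k < n := by omega
      rw [Function.iterate_succ_apply', ih (le_of_lt hk'), ← (horb k hk').1]
  have hperiodic : Function.IsPeriodicPt f n p := by
    show f^[n] p = p
    rw [hiter n le_rfl, hfix]
  have hmem : ∀ k, k < n → f^[k] p ∈ HSet (a (ι k)) (b (ι k)) r := by
    intro k hk
    rw [hiter k hk.le]
    exact (horb k hk).2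
  refine ⟨p, ?_⟩
  by_contra hmn
  have hdvd : Function.minimalPeriod f p ∣ n := hperiodic.minimalPeriod_dvd
  have hmpos : 0 < Function.minimalPeriod f p :=
    Function.IsPeriodicPt.minimalPeriod_pos (by omega) hperiodic
  have hmlt : Function.minimalPeriod f p < n :=
    lt_of_le_of_ne (Nat.le_of_dvd (by omega) hdvd) hmn
  have h1 : f^[Function.minimalPeriod f p] p = p := Function.isPeriodicPt_minimalPeriod f p
  have hp0 : p ∈ HSet (a 0) (b 0) r := by
    have := hmem 0 (by omega)
    rw [hι0] at this
    simpa using this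
  have hpm1 : p ∈ HSet (a 1) (b 1) r := by
    have := hmem (Function.minimalPeriod f p) hmlt
    rw [h1, hιlt _ hmpos hmlt] at this
    exact this
  exact Set.disjoint_left.mp hdisj hp0 hpm1
end

section
/- Let f : ℝ² → ℝ² be continuous, and suppose N₀ and N₂ are disjoint h-sets such that N₀ f-covers N₂ horizontally, N₂ f-covers N₂ horizontally, and N₂ f³-covers N₀ horizontally (covering with respect to the map f³). Then f has a fixed point, and for every n ≥ 5 a periodic point of least period exactly n, all of whose orbit points at itinerary-positions in N₂ lie in int N₂ and whose single loop-start lies in int N₀. -/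
section MirandaHelpers
open Complex Real


lemma uq (b b' : ℝ) (h : Complex.exp (b * Complex.I) = Complex.exp (b' * Complex.I))
    (hd : |b - b'| < 2 * Real.pi) : b = b' := by
  obtain ⟨n, hn⟩ := Complex.exp_eq_exp_iff_exists_int.1 h
  have him := congrArg Complex.im hn
  push_cast at him
  simp [Complex.mul_im, Complex.add_im, Complex.mul_re] at him
  have habs : |(n : ℝ)| * (2 * π) < 1 * (2 * π) := by
    calc |(n:ℝ)| * (2*π) = |(n:ℝ) * (2*π)| := by
          rw [abs_mul, abs_of_pos (by positivity : (0:ℝ) < 2*π)]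
      _ = |b - b'| := by rw [him]; ring_nf
      _ < 1 * (2*π) := by linarith
  have : |(n:ℝ)| < 1 := lt_of_mul_lt_mul_right habs (by positivity)
  have hn0 : n = 0 := by
    have h2 : |n| < 1 := by exact_mod_cast this
    have := abs_lt.1 h2
    omega
  rw [hn0] at him; simpa using him

lemma exp_arg' (z : ℂ) (hz : z ≠ 0) : Complex.exp (z.arg * Complex.I) = z / ‖z‖ := by
  have ha : ((‖z‖ : ℝ) : ℂ) ≠ 0 := by simpa using hz
  rw [eq_div_iff ha, mul_comm]
  exact Complex.norm_mul_exp_arg_mul_I z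

lemma rePos (z w : ℂ) (hz : z ≠ 0) (h : ‖w - z‖ < ‖z‖) :
    0 < (w / z).re := by
  have he : w / z = 1 + (w - z) / z := by rw [one_add_div hz, add_sub_cancel]
  rw [he, Complex.add_re, Complex.one_re]
  have h1 : |((w - z) / z).re| ≤ ‖(w - z) / z‖ := Complex.abs_re_le_norm _
  have h2 : ‖(w - z) / z‖ < 1 := by
    rw [norm_div, div_lt_one (norm_pos_iff.mpr hz)]; exact h
  have h3 := abs_lt.1 (lt_of_le_of_lt h1 h2)
  linarith [h3.1]

lemma reInv {q : ℂ} (h : 0 < q.re) : 0 < (q⁻¹).re := by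
  rw [Complex.inv_re]
  have hq : q ≠ 0 := fun h0 => by simp [h0] at h
  exact div_pos h (Complex.normSq_pos.2 hq)

lemma absarg_half {z : ℂ} (h : 0 ≤ z.re) : |z.arg| ≤ π / 2 :=
  abs_le.2 ⟨Complex.neg_pi_div_two_le_arg_iff.2 (Or.inl h),
    Complex.arg_le_pi_div_two_iff.2 (Or.inl h)⟩

lemma key (z w : ℂ) (hz : z ≠ 0) (hw : w ≠ 0) (b b' : ℝ)
    (hb : Complex.exp (b * Complex.I) = z / ‖z‖)
    (hb' : Complex.exp (b' * Complex.I) = w / ‖w‖)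
    (hbd : |b' - b| ≤ π) (hre : 0 < (w / z).re) :
    (w / z).arg = b' - b := by
  have hq : w / z ≠ 0 := div_ne_zero hw hz
  have e1 : Complex.exp ((w / z).arg * Complex.I) = (w / z) / ‖w / z‖ :=
    exp_arg' _ hq
  have e2 : Complex.exp ((b' - b : ℝ) * Complex.I) = (w / z) / ‖w / z‖ := by
    have hc : ((b' - b : ℝ) : ℂ) * Complex.I = b' * Complex.I - b * Complex.I := by
      push_cast; ring
    rw [hc, Complex.exp_sub, hb, hb', norm_div]
    have hza : ((‖z‖ : ℝ) : ℂ) ≠ 0 := by simpa using hz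
    have hwa : ((‖w‖ : ℝ) : ℂ) ≠ 0 := by simpa using hw
    field_simp
    push_cast
    field_simp
  apply uq
  · rw [e1, e2]
  · have h1 : |(w / z).arg| ≤ π / 2 := absarg_half hre.le
    have := abs_sub (w/z).arg (b' - b)
    calc |(w/z).arg - (b' - b)| ≤ |(w/z).arg| + |b' - b| := abs_sub _ _
      _ ≤ π / 2 + π := by linarith
      _ < 2 * π := by linarith [Real.pi_pos]


noncomputable def betaT (z : ℂ) : ℝ := -Complex.arg ((starRingEnd ℂ) z)
noncomputable def betaL (z : ℂ) : ℝ := Complex.arg (-z) - Real.pi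

lemma exp_betaT (z : ℂ) (hz : z ≠ 0) :
    Complex.exp ((betaT z : ℝ) * Complex.I) = z / ‖z‖ := by
  have hcz : (starRingEnd ℂ) z ≠ 0 := by simpa using hz
  have h1 : ((betaT z : ℝ) : ℂ) * Complex.I = -(Complex.arg ((starRingEnd ℂ) z) * Complex.I) := by
    simp only [betaT]; push_cast; ring
  rw [h1, Complex.exp_neg, exp_arg' _ hcz]
  rw [Complex.norm_conj]
  have hza : ((‖z‖ : ℝ) : ℂ) ≠ 0 := by simpa using hz
  rw [inv_div, div_eq_div_iff hcz hza]
  have := Complex.mul_conj z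
  rw [this, Complex.normSq_eq_norm_sq]
  push_cast; ring

lemma exp_betaL (z : ℂ) (hz : z ≠ 0) :
    Complex.exp ((betaL z : ℝ) * Complex.I) = z / ‖z‖ := by
  have hnz : -z ≠ 0 := neg_ne_zero.2 hz
  have h1 : ((betaL z : ℝ) : ℂ) * Complex.I
      = Complex.arg (-z) * Complex.I - Real.pi * Complex.I := by
    simp only [betaL]; push_cast; ring
  rw [h1, Complex.exp_sub, exp_arg' _ hnz, Complex.exp_pi_mul_I, norm_neg]
  field_simp


lemma betaT_mem {z : ℂ} (h : z.im ≤ 0) : -π ≤ betaT z ∧ betaT z ≤ 0 := by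
  unfold betaT
  have h1 : 0 ≤ Complex.arg ((starRingEnd ℂ) z) := by
    rw [Complex.arg_nonneg_iff, Complex.conj_im]; linarith
  have h2 := Complex.arg_le_pi ((starRingEnd ℂ) z)
  constructor <;> linarith

lemma betaL_mem {z : ℂ} (h : z.re ≤ 0) : -(3*π/2) ≤ betaL z ∧ betaL z ≤ -(π/2) := by
  unfold betaL
  have h1 : |Complex.arg (-z)| ≤ π/2 := absarg_half (by rw [Complex.neg_re]; linarith)
  have := abs_le.1 h1
  constructor <;> linarith

theorem mirandaC (g : ℝ × ℝ → ℂ) (hg : Continuous g) (A B C D : ℝ) (hAB : A ≤ B) (hCD : C ≤ D)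
    (hL : ∀ y ∈ Set.Icc C D, (g (A, y)).re ≤ 0)
    (hR : ∀ y ∈ Set.Icc C D, 0 ≤ (g (B, y)).re)
    (hBo : ∀ x ∈ Set.Icc A B, 0 ≤ (g (x, C)).im)
    (hTo : ∀ x ∈ Set.Icc A B, (g (x, D)).im ≤ 0) :
    ∃ p ∈ Set.Icc A B ×ˢ Set.Icc C D, g p = 0 := by
  by_contra hcon
  push_neg at hcon
  set R : Set (ℝ × ℝ) := Set.Icc A B ×ˢ Set.Icc C D with hRdef
  have hRc : IsCompact R := isCompact_Icc.prod isCompact_Icc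
  have hRne : R.Nonempty := ⟨(A, C), ⟨⟨le_rfl, hAB⟩, ⟨le_rfl, hCD⟩⟩⟩
  obtain ⟨p₀, hp₀, hmin⟩ := hRc.exists_isMinOn hRne ((continuous_norm.comp hg).continuousOn)
  set m := ‖g p₀‖ with hmdef
  have hm0 : 0 < m := norm_pos_iff.mpr (hcon p₀ hp₀)
  have hmle : ∀ q ∈ R, m ≤ ‖g q‖ := fun q hq => isMinOn_iff.1 hmin q hq
  have huc := hRc.uniformContinuousOn_of_continuous hg.continuousOn
  rw [Metric.uniformContinuousOn_iff] at huc
  obtain ⟨δ, hδ0, hδ⟩ := huc m hm0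
  obtain ⟨N, hN⟩ := exists_nat_gt (((B - A) + (D - C)) / δ)
  have hN0 : 0 < N := by
    have h1 : (0:ℝ) ≤ ((B - A) + (D - C)) / δ := div_nonneg (by linarith) hδ0.le
    exact_mod_cast lt_of_le_of_lt h1 hN
  have hNR : (0:ℝ) < (N:ℝ) := by exact_mod_cast hN0
  set s := (B - A) / N with hsdef
  set t := (D - C) / N with htdef
  have hs0 : 0 ≤ s := div_nonneg (by linarith) hNR.le
  have ht0 : 0 ≤ t := div_nonneg (by linarith) hNR.le
  have hst : s + t < δ := by
    have h2 : (B - A) + (D - C) < δ * N := by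
      rw [div_lt_iff₀ hδ0] at hN; linarith
    rw [hsdef, htdef, ← add_div]
    rw [div_lt_iff₀ hNR]
    linarith
  have hNs : A + N * s = B := by
    rw [hsdef]; field_simp; ring
  have hNt : C + N * t = D := by
    rw [htdef]; field_simp; ring
  set P : ℕ → ℕ → ℝ × ℝ := fun i j => (A + i * s, C + j * t) with hPdef
  have hPmem : ∀ i j : ℕ, i ≤ N → j ≤ N → P i j ∈ R := by
    intro i j hi hj
    have hia : (i:ℝ) ≤ N := by exact_mod_cast hi
    have hja : (j:ℝ) ≤ N := by exact_mod_cast hj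
    refine ⟨⟨?_, ?_⟩, ⟨?_, ?_⟩⟩
    · simp only [hPdef]
      nlinarith [mul_nonneg (Nat.cast_nonneg i : (0:ℝ) ≤ i) hs0]
    · simp only [hPdef]
      nlinarith [mul_le_mul_of_nonneg_right hia hs0]
    · simp only [hPdef]
      nlinarith [mul_nonneg (Nat.cast_nonneg j : (0:ℝ) ≤ j) ht0]
    · simp only [hPdef]
      nlinarith [mul_le_mul_of_nonneg_right hja ht0]
  have hPdist : ∀ i j i' j' : ℕ, (i' = i ∨ i' = i + 1) → (j' = j ∨ j' = j + 1) →
      dist (P i' j') (P i j) < δ := by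
    intro i j i' j' hi hj
    rw [Prod.dist_eq]
    apply max_lt
    · show dist (A + (i':ℝ) * s) (A + (i:ℝ) * s) < δ
      rcases hi with rfl | rfl
      · rw [dist_self]; exact hδ0
      · rw [Real.dist_eq]; push_cast
        rw [show A + ((i:ℝ) + 1) * s - (A + (i:ℝ) * s) = s from by ring, _root_.abs_of_nonneg hs0]
        linarith
    · show dist (C + (j':ℝ) * t) (C + (j:ℝ) * t) < δ
      rcases hj with rfl | rfl
      · rw [dist_self]; exact hδ0
      · rw [Real.dist_eq]; push_cast
        rw [show C + ((j:ℝ) + 1) * t - (C + (j:ℝ) * t) = t from by ring, _root_.abs_of_nonneg ht0]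
        linarith
  set u : ℕ → ℕ → ℂ := fun i j => g (P i j) with hudef
  have hune : ∀ i j, i ≤ N → j ≤ N → u i j ≠ 0 := fun i j hi hj => hcon _ (hPmem i j hi hj)
  have hquot : ∀ i j i' j', i ≤ N → j ≤ N → i' ≤ N → j' ≤ N →
      (i' = i ∨ i' = i + 1) → (j' = j ∨ j' = j + 1) → 0 < (u i' j' / u i j).re := by
    intro i j i' j' hi hj hi' hj' hadi hadj
    apply rePos _ _ (hune i j hi hj)
    have h1 := hδ (P i' j') (hPmem i' j' hi' hj') (P i j) (hPmem i j hi hj)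
      (hPdist i j i' j' hadi hadj)
    rw [Complex.dist_eq] at h1
    exact lt_of_lt_of_le h1 (hmle _ (hPmem i j hi hj))
  -- boundary coordinates
  have hPb : ∀ i : ℕ, P i 0 = (A + i * s, C) := by intro i; simp [hPdef]
  have hPt : ∀ i : ℕ, P i N = (A + i * s, D) := by intro i; simp [hPdef, hNt]
  have hPl : ∀ j : ℕ, P 0 j = (A, C + j * t) := by intro j; simp [hPdef]
  have hPr : ∀ j : ℕ, P N j = (B, C + j * t) := by intro j; simp [hPdef, hNs]
  have hxmem : ∀ i : ℕ, i ≤ N → A + i * s ∈ Set.Icc A B := fun i hi => (hPmem i 0 hi (Nat.zero_le _)).1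
  have hymem : ∀ j : ℕ, j ≤ N → C + j * t ∈ Set.Icc C D := fun j hj => (hPmem 0 j (Nat.zero_le _) hj).2
  have hbotIm : ∀ i, i ≤ N → 0 ≤ (u i 0).im := by
    intro i hi; rw [hudef]; simp only [hPb]; exact hBo _ (hxmem i hi)
  have htopIm : ∀ i, i ≤ N → (u i N).im ≤ 0 := by
    intro i hi; rw [hudef]; simp only [hPt]; exact hTo _ (hxmem i hi)
  have hleftRe : ∀ j, j ≤ N → (u 0 j).re ≤ 0 := by
    intro j hj; rw [hudef]; simp only [hPl]; exact hL _ (hymem j hj)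
  have hrightRe : ∀ j, j ≤ N → 0 ≤ (u N j).re := by
    intro j hj; rw [hudef]; simp only [hPr]; exact hR _ (hymem j hj)
  set Hh : ℕ → ℕ → ℝ := fun i j => Complex.arg (u (i+1) j / u i j) with hHdef
  set Vv : ℕ → ℕ → ℝ := fun i j => Complex.arg (u i (j+1) / u i j) with hVdef
  -- cell identity
  have cell : ∀ i j, i < N → j < N →
      Hh i j - Hh i (j+1) + (Vv (i+1) j - Vv i j) = 0 := by
    intro i j hi hj
    have hi1 : i + 1 ≤ N := hi
    have hj1 : j + 1 ≤ N := hj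
    have hiN : i ≤ N := le_of_lt hi
    have hjN : j ≤ N := le_of_lt hj
    set q := u i j with hqdef
    have hqne : q ≠ 0 := hune i j hiN hjN
    have h10 : 0 < (u (i+1) j / q).re := hquot i j (i+1) j hiN hjN hi1 hjN (Or.inr rfl) (Or.inl rfl)
    have h11 : 0 < (u (i+1) (j+1) / q).re := hquot i j (i+1) (j+1) hiN hjN hi1 hj1 (Or.inr rfl) (Or.inr rfl)
    have h01 : 0 < (u i (j+1) / q).re := hquot i j i (j+1) hiN hjN hiN hj1 (Or.inl rfl) (Or.inr rfl)
    have hne10 : u (i+1) j / q ≠ 0 := fun h => by simp [h] at h10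
    have hne11 : u (i+1) (j+1) / q ≠ 0 := fun h => by simp [h] at h11
    have hne01 : u i (j+1) / q ≠ 0 := fun h => by simp [h] at h01
    set a1 := Complex.arg (u (i+1) j / q) with ha1def
    set a2 := Complex.arg (u (i+1) (j+1) / q) with ha2def
    set a3 := Complex.arg (u i (j+1) / q) with ha3def
    have hb1 : |a1| ≤ π/2 := absarg_half h10.le
    have hb2 : |a2| ≤ π/2 := absarg_half h11.le
    have hb3 : |a3| ≤ π/2 := absarg_half h01.le
    have hdiv1 : u (i+1) (j+1) / u (i+1) j = (u (i+1) (j+1) / q) / (u (i+1) j / q) := by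
      rw [div_div_div_cancel_right₀ hqne]
    have hdiv2 : u (i+1) (j+1) / u i (j+1) = (u (i+1) (j+1) / q) / (u i (j+1) / q) := by
      rw [div_div_div_cancel_right₀ hqne]
    have hv1 : Vv (i+1) j = a2 - a1 := by
      rw [hVdef]
      show Complex.arg (u (i+1) (j+1) / u (i+1) j) = a2 - a1
      rw [hdiv1]
      exact key _ _ hne10 hne11 a1 a2 (exp_arg' _ hne10) (exp_arg' _ hne11)
        (by have := abs_sub a2 a1; linarith [abs_sub a2 a1])
        (by rw [← hdiv1]
            exact hquot (i+1) j (i+1) (j+1) hi1 hjN hi1 hj1 (Or.inl rfl) (Or.inr rfl))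
    have hh1 : Hh i (j+1) = a2 - a3 := by
      rw [hHdef]
      show Complex.arg (u (i+1) (j+1) / u i (j+1)) = a2 - a3
      rw [hdiv2]
      exact key _ _ hne01 hne11 a3 a2 (exp_arg' _ hne01) (exp_arg' _ hne11)
        (by linarith [abs_sub a2 a3])
        (by rw [← hdiv2]
            exact hquot i (j+1) (i+1) (j+1) hiN hj1 hi1 hj1 (Or.inr rfl) (Or.inl rfl))
    have hh0 : Hh i j = a1 := rfl
    have hv0 : Vv i j = a3 := rfl
    rw [hh0, hh1, hv0, hv1]; ring
  -- boundary edge telescoping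
  have hHb : ∀ i, i < N → Hh i 0 = Complex.arg (u (i+1) 0) - Complex.arg (u i 0) := by
    intro i hi
    have hiN : i ≤ N := le_of_lt hi
    have hi1 : i + 1 ≤ N := hi
    have hb := hbotIm i hiN
    have hb' := hbotIm (i+1) hi1
    have h1 : 0 ≤ Complex.arg (u i 0) := Complex.arg_nonneg_iff.2 hb
    have h2 : 0 ≤ Complex.arg (u (i+1) 0) := Complex.arg_nonneg_iff.2 hb'
    exact key _ _ (hune i 0 hiN (Nat.zero_le _)) (hune (i+1) 0 hi1 (Nat.zero_le _)) _ _
      (exp_arg' _ (hune i 0 hiN (Nat.zero_le _))) (exp_arg' _ (hune (i+1) 0 hi1 (Nat.zero_le _)))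
      (abs_le.2 ⟨by linarith [Complex.arg_le_pi (u i 0)],
        by linarith [Complex.arg_le_pi (u (i+1) 0)]⟩)
      (hquot i 0 (i+1) 0 hiN (Nat.zero_le _) hi1 (Nat.zero_le _) (Or.inr rfl) (Or.inl rfl))
  have hHt : ∀ i, i < N → Hh i N = betaT (u (i+1) N) - betaT (u i N) := by
    intro i hi
    have hiN : i ≤ N := le_of_lt hi
    have hi1 : i + 1 ≤ N := hi
    have h1 := betaT_mem (htopIm i hiN)
    have h2 := betaT_mem (htopIm (i+1) hi1)
    exact key _ _ (hune i N hiN le_rfl) (hune (i+1) N hi1 le_rfl) _ _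
      (exp_betaT _ (hune i N hiN le_rfl)) (exp_betaT _ (hune (i+1) N hi1 le_rfl))
      (abs_le.2 ⟨by linarith, by linarith⟩)
      (hquot i N (i+1) N hiN le_rfl hi1 le_rfl (Or.inr rfl) (Or.inl rfl))
  have hVr : ∀ j, j < N → Vv N j = Complex.arg (u N (j+1)) - Complex.arg (u N j) := by
    intro j hj
    have hjN : j ≤ N := le_of_lt hj
    have hj1 : j + 1 ≤ N := hj
    have h1 := abs_le.1 (absarg_half (hrightRe j hjN))
    have h2 := abs_le.1 (absarg_half (hrightRe (j+1) hj1))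
    exact key _ _ (hune N j le_rfl hjN) (hune N (j+1) le_rfl hj1) _ _
      (exp_arg' _ (hune N j le_rfl hjN)) (exp_arg' _ (hune N (j+1) le_rfl hj1))
      (abs_le.2 ⟨by linarith [Real.pi_pos], by linarith [Real.pi_pos]⟩)
      (hquot N j N (j+1) le_rfl hjN le_rfl hj1 (Or.inl rfl) (Or.inr rfl))
  have hVl : ∀ j, j < N → Vv 0 j = betaL (u 0 (j+1)) - betaL (u 0 j) := by
    intro j hj
    have hjN : j ≤ N := le_of_lt hj
    have hj1 : j + 1 ≤ N := hj
    have h1 := betaL_mem (hleftRe j hjN)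
    have h2 := betaL_mem (hleftRe (j+1) hj1)
    exact key _ _ (hune 0 j (Nat.zero_le _) hjN) (hune 0 (j+1) (Nat.zero_le _) hj1) _ _
      (exp_betaL _ (hune 0 j (Nat.zero_le _) hjN)) (exp_betaL _ (hune 0 (j+1) (Nat.zero_le _) hj1))
      (abs_le.2 ⟨by linarith, by linarith⟩)
      (hquot 0 j 0 (j+1) (Nat.zero_le _) hjN (Nat.zero_le _) hj1 (Or.inl rfl) (Or.inr rfl))
  -- grand sum
  have hgrand : (∑ i ∈ Finset.range N, (Hh i 0 - Hh i N))
      + (∑ j ∈ Finset.range N, (Vv N j - Vv 0 j)) = 0 := by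
    have h0 : ∑ i ∈ Finset.range N, ∑ j ∈ Finset.range N,
        (Hh i j - Hh i (j+1) + (Vv (i+1) j - Vv i j)) = 0 :=
      Finset.sum_eq_zero fun i hi => Finset.sum_eq_zero fun j hj =>
        cell i j (Finset.mem_range.1 hi) (Finset.mem_range.1 hj)
    have h1 : ∀ i, ∑ j ∈ Finset.range N, (Hh i j - Hh i (j+1)) = Hh i 0 - Hh i N :=
      fun i => Finset.sum_range_sub' (fun j => Hh i j) N
    have h2 : ∀ j, ∑ i ∈ Finset.range N, (Vv (i+1) j - Vv i j) = Vv N j - Vv 0 j :=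
      fun j => Finset.sum_range_sub (fun i => Vv i j) N
    calc (∑ i ∈ Finset.range N, (Hh i 0 - Hh i N))
          + (∑ j ∈ Finset.range N, (Vv N j - Vv 0 j))
        = (∑ i ∈ Finset.range N, ∑ j ∈ Finset.range N, (Hh i j - Hh i (j+1)))
          + (∑ j ∈ Finset.range N, ∑ i ∈ Finset.range N, (Vv (i+1) j - Vv i j)) := by
          rw [Finset.sum_congr rfl fun i _ => (h1 i).symm]
          rw [Finset.sum_congr rfl fun j _ => (h2 j).symm]
      _ = ∑ i ∈ Finset.range N, ∑ j ∈ Finset.range N,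
            (Hh i j - Hh i (j+1) + (Vv (i+1) j - Vv i j)) := by
          have hcomm : ∑ j ∈ Finset.range N, ∑ i ∈ Finset.range N, (Vv (i+1) j - Vv i j)
              = ∑ i ∈ Finset.range N, ∑ j ∈ Finset.range N, (Vv (i+1) j - Vv i j) :=
            Finset.sum_comm
          rw [hcomm, ← Finset.sum_add_distrib]
          exact Finset.sum_congr rfl fun i _ => (Finset.sum_add_distrib).symm
      _ = 0 := h0
  have hSb : ∑ i ∈ Finset.range N, Hh i 0
      = Complex.arg (u N 0) - Complex.arg (u 0 0) := by
    rw [Finset.sum_congr rfl fun i hi => hHb i (Finset.mem_range.1 hi)]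
    exact Finset.sum_range_sub (fun i => Complex.arg (u i 0)) N
  have hSt : ∑ i ∈ Finset.range N, Hh i N = betaT (u N N) - betaT (u 0 N) := by
    rw [Finset.sum_congr rfl fun i hi => hHt i (Finset.mem_range.1 hi)]
    exact Finset.sum_range_sub (fun i => betaT (u i N)) N
  have hSr : ∑ j ∈ Finset.range N, Vv N j
      = Complex.arg (u N N) - Complex.arg (u N 0) := by
    rw [Finset.sum_congr rfl fun j hj => hVr j (Finset.mem_range.1 hj)]
    exact Finset.sum_range_sub (fun j => Complex.arg (u N j)) N
  have hSl : ∑ j ∈ Finset.range N, Vv 0 j = betaL (u 0 N) - betaL (u 0 0) := by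
    rw [Finset.sum_congr rfl fun j hj => hVl j (Finset.mem_range.1 hj)]
    exact Finset.sum_range_sub (fun j => betaL (u 0 j)) N
  rw [Finset.sum_sub_distrib, Finset.sum_sub_distrib, hSb, hSt, hSr, hSl] at hgrand
  -- corner identities
  have hc1 : betaT (u N N) = Complex.arg (u N N) := by
    apply uq
    · rw [exp_betaT _ (hune N N le_rfl le_rfl), exp_arg' _ (hune N N le_rfl le_rfl)]
    · have h1 := betaT_mem (htopIm N le_rfl)
      have h2 := abs_le.1 (absarg_half (hrightRe N le_rfl))
      rw [abs_sub_lt_iff]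
      constructor <;> linarith [Real.pi_pos]
  have hc2 : betaL (u 0 N) = betaT (u 0 N) := by
    apply uq
    · rw [exp_betaL _ (hune 0 N (Nat.zero_le _) le_rfl),
        exp_betaT _ (hune 0 N (Nat.zero_le _) le_rfl)]
    · have h1 := betaL_mem (hleftRe N le_rfl)
      have h2 := betaT_mem (htopIm 0 (Nat.zero_le _))
      rw [abs_sub_lt_iff]
      constructor <;> linarith [Real.pi_pos]
  -- final contradiction
  have hfin : Complex.arg (u 0 0) = betaL (u 0 0) := by linarith
  have h1 : 0 ≤ Complex.arg (u 0 0) := Complex.arg_nonneg_iff.2 (hbotIm 0 (Nat.zero_le _))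
  have h2 := betaL_mem (hleftRe 0 (Nat.zero_le _))
  linarith [Real.pi_pos]


noncomputable def toG (Φ : ℝ × ℝ → ℝ × ℝ) : ℝ × ℝ → ℂ :=
  fun p => ((Φ p).1 - p.1 : ℝ) + ((Φ p).2 - p.2 : ℝ) * Complex.I

lemma toG_re (Φ : ℝ × ℝ → ℝ × ℝ) (p : ℝ × ℝ) : (toG Φ p).re = (Φ p).1 - p.1 := by
  simp [toG]

lemma toG_im (Φ : ℝ × ℝ → ℝ × ℝ) (p : ℝ × ℝ) : (toG Φ p).im = (Φ p).2 - p.2 := by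
  simp [toG]

lemma toG_cont {Φ : ℝ × ℝ → ℝ × ℝ} (hΦ : Continuous Φ) : Continuous (toG Φ) := by
  apply Continuous.add
  · exact Complex.continuous_ofReal.comp ((continuous_fst.comp hΦ).sub continuous_fst)
  · exact (Complex.continuous_ofReal.comp
      ((continuous_snd.comp hΦ).sub continuous_snd)).mul continuous_const

lemma toG_zero {Φ : ℝ × ℝ → ℝ × ℝ} {p : ℝ × ℝ} (h : toG Φ p = 0) : Φ p = p := by
  have h1 := congrArg Complex.re h
  have h2 := congrArg Complex.im h
  rw [toG_re] at h1; rw [toG_im] at h2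
  simp at h1 h2
  exact Prod.ext (by linarith) (by linarith)

theorem mirandaR (Φ : ℝ × ℝ → ℝ × ℝ) (hΦ : Continuous Φ) (A B C D : ℝ)
    (hAB : A ≤ B) (hCD : C ≤ D)
    (hy : ∀ p : ℝ × ℝ, C ≤ (Φ p).2 ∧ (Φ p).2 ≤ D)
    (hx : (∀ y ∈ Set.Icc C D, (Φ (A, y)).1 < A ∧ B < (Φ (B, y)).1)
        ∨ (∀ y ∈ Set.Icc C D, B < (Φ (A, y)).1 ∧ (Φ (B, y)).1 < A)) :
    ∃ p ∈ Set.Icc A B ×ˢ Set.Icc C D, Φ p = p := by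
  rcases hx with hx | hx
  · obtain ⟨p, hp, hz⟩ := mirandaC (toG Φ) (toG_cont hΦ) A B C D hAB hCD
      (fun y hy' => by rw [toG_re]; linarith [(hx y hy').1])
      (fun y hy' => by rw [toG_re]; linarith [(hx y hy').2])
      (fun x hx' => by rw [toG_im]; linarith [(hy (x, C)).1])
      (fun x hx' => by rw [toG_im]; linarith [(hy (x, D)).2])
    exact ⟨p, hp, toG_zero hz⟩
  · set τ : ℝ × ℝ → ℝ × ℝ := fun p => (A + B - p.1, C + D - p.2) with hτ
    have hτc : Continuous τ := by
      apply Continuous.prodMk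
      · exact (continuous_const.sub continuous_fst)
      · exact (continuous_const.sub continuous_snd)
    set g : ℝ × ℝ → ℂ := fun p => (starRingEnd ℂ) (toG Φ (τ p)) with hg
    have hgc : Continuous g := Complex.continuous_conj.comp ((toG_cont hΦ).comp hτc)
    obtain ⟨p, hp, hz⟩ := mirandaC g hgc A B C D hAB hCD
      (fun y hy' => by
        have : τ (A, y) = (B, C + D - y) := by simp [hτ]
        have hy2 : C + D - y ∈ Set.Icc C D := ⟨by linarith [hy'.2], by linarith [hy'.1]⟩
        simp only [hg, Complex.conj_re, this, toG_re]
        linarith [(hx _ hy2).2])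
      (fun y hy' => by
        have : τ (B, y) = (A, C + D - y) := by simp [hτ]
        have hy2 : C + D - y ∈ Set.Icc C D := ⟨by linarith [hy'.2], by linarith [hy'.1]⟩
        simp only [hg, Complex.conj_re, this, toG_re]
        linarith [(hx _ hy2).1])
      (fun x hx' => by
        have : τ (x, C) = (A + B - x, D) := by simp [hτ]
        simp only [hg, Complex.conj_im, this, toG_im]
        linarith [(hy (A + B - x, D)).2])
      (fun x hx' => by
        have : τ (x, D) = (A + B - x, C) := by simp [hτ]
        simp only [hg, Complex.conj_im, this, toG_im]
        linarith [(hy (A + B - x, C)).1])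
    refine ⟨τ p, ⟨⟨?_, ?_⟩, ⟨?_, ?_⟩⟩, ?_⟩
    · show A ≤ A + B - p.1; linarith [hp.1.2]
    · show A + B - p.1 ≤ B; linarith [hp.1.1]
    · show C ≤ C + D - p.2; linarith [hp.2.2]
    · show C + D - p.2 ≤ D; linarith [hp.2.1]
    · have h2 : (starRingEnd ℂ) (toG Φ (τ p)) = 0 := hz
      rw [starRingEnd_apply] at h2
      exact toG_zero (star_eq_zero.1 h2)

end MirandaHelpers

section CoverHelpers
open Set

-- membership lemmas
lemma mem_HSet {a b r : ℝ} {p : ℝ × ℝ} :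
    p ∈ HSet a b r ↔ (a ≤ p.1 ∧ p.1 ≤ b) ∧ (-r ≤ p.2 ∧ p.2 ≤ r) := by
  rw [HSet, Set.mem_prod, Set.mem_Icc, Set.mem_Icc]
lemma mem_LeftSide {a : ℝ} {p : ℝ × ℝ} : p ∈ LeftSide a ↔ p.1 < a := by
  simp [LeftSide, Set.mem_prod]
lemma mem_RightSide {b : ℝ} {p : ℝ × ℝ} : p ∈ RightSide b ↔ b < p.1 := by
  simp [RightSide, Set.mem_prod]
lemma mem_LeftEdge {a r : ℝ} {p : ℝ × ℝ} :
    p ∈ LeftEdge a r ↔ p.1 = a ∧ (-r ≤ p.2 ∧ p.2 ≤ r) := by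
  rw [LeftEdge, Set.mem_prod, Set.mem_singleton_iff, Set.mem_Icc]
lemma mem_RightEdge {b r : ℝ} {p : ℝ × ℝ} :
    p ∈ RightEdge b r ↔ p.1 = b ∧ (-r ≤ p.2 ∧ p.2 ≤ r) := by
  rw [RightEdge, Set.mem_prod, Set.mem_singleton_iff, Set.mem_Icc]
lemma mem_HorizBdry {a b r : ℝ} {p : ℝ × ℝ} :
    p ∈ HorizBdry a b r ↔ (a ≤ p.1 ∧ p.1 ≤ b) ∧ (p.2 = -r ∨ p.2 = r) := by
  rw [HorizBdry, Set.mem_prod, Set.mem_Icc, Set.mem_insert_iff, Set.mem_singleton_iff]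

-- clamps
noncomputable def clampI (lo hi t : ℝ) : ℝ := max lo (min hi t)
noncomputable def clampB (a b r : ℝ) (p : ℝ × ℝ) : ℝ × ℝ :=
  (clampI a b p.1, clampI (-r) r p.2)
noncomputable def clampY (r : ℝ) (p : ℝ × ℝ) : ℝ × ℝ := (p.1, clampI (-r) r p.2)

lemma clampI_mem {lo hi : ℝ} (h : lo ≤ hi) (t : ℝ) :
    lo ≤ clampI lo hi t ∧ clampI lo hi t ≤ hi :=
  ⟨le_max_left _ _, max_le h (min_le_left _ _)⟩
lemma clampI_id {lo hi t : ℝ} (h1 : lo ≤ t) (h2 : t ≤ hi) : clampI lo hi t = t := by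
  rw [clampI, min_eq_right h2, max_eq_right h1]
lemma clampI_lo {lo hi t : ℝ} (h : lo ≤ hi) (ht : t ≤ lo) : clampI lo hi t = lo := by
  rw [clampI, min_eq_right (ht.trans h), max_eq_left ht]
lemma clampI_hi {lo hi t : ℝ} (h : lo ≤ hi) (ht : hi ≤ t) : clampI lo hi t = hi := by
  rw [clampI, min_eq_left ht, max_eq_right h]
lemma clampI_cont (lo hi : ℝ) : Continuous (clampI lo hi) :=
  continuous_const.max (continuous_const.min continuous_id)
lemma clampB_cont (a b r : ℝ) : Continuous (clampB a b r) :=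
  ((clampI_cont a b).comp continuous_fst).prodMk ((clampI_cont (-r) r).comp continuous_snd)
lemma clampY_cont (r : ℝ) : Continuous (clampY r) :=
  continuous_fst.prodMk ((clampI_cont (-r) r).comp continuous_snd)

-- covering consequences
lemma cover_strip {g : ℝ × ℝ → ℝ × ℝ} {a b a' b' r : ℝ}
    (hcov : CoversH g a b a' b' r) {z : ℝ × ℝ} (hz : z ∈ HSet a b r)
    (h1 : a' ≤ (g z).1) (h2 : (g z).1 ≤ b') :
    g z ∈ HSet a' b' r ∧ -r < (g z).2 ∧ (g z).2 < r := by
  obtain ⟨hm, hnb⟩ := hcov.1 (Set.mem_image_of_mem g hz)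
  have hy : -r ≤ (g z).2 ∧ (g z).2 ≤ r := by
    rcases hm with (hm | hm) | hm
    · exact absurd (mem_LeftSide.1 hm) (by linarith)
    · exact (mem_HSet.1 hm).2
    · exact absurd (mem_RightSide.1 hm) (by linarith)
  have hne : (g z).2 ≠ -r ∧ (g z).2 ≠ r := by
    constructor <;> intro h' <;> exact hnb (mem_HorizBdry.2 ⟨⟨h1, h2⟩, by tauto⟩)
  refine ⟨mem_HSet.2 ⟨⟨h1, h2⟩, hy⟩, ?_, ?_⟩
  · exact lt_of_le_of_ne hy.1 (Ne.symm hne.1)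
  · exact lt_of_le_of_ne hy.2 hne.2

lemma cover_push {g : ℝ × ℝ → ℝ × ℝ} {a b a' b' r : ℝ}
    (hcov : CoversH g a b a' b' r) {z : ℝ × ℝ}
    (hz : z ∈ LeftEdge a r ∪ RightEdge b r) :
    (g z).1 < a' ∨ b' < (g z).1 := by
  rcases hcov.2 with ⟨hL, hR⟩ | ⟨hL, hR⟩ <;> rcases hz with hz | hz
  · exact Or.inl (mem_LeftSide.1 (hL (Set.mem_image_of_mem g hz)))
  · exact Or.inr (mem_RightSide.1 (hR (Set.mem_image_of_mem g hz)))
  · exact Or.inr (mem_RightSide.1 (hL (Set.mem_image_of_mem g hz)))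
  · exact Or.inl (mem_LeftSide.1 (hR (Set.mem_image_of_mem g hz)))

lemma clampB_edge {a b r : ℝ} (hab : a ≤ b) (hr : 0 < r) {q : ℝ × ℝ}
    (hq : q.1 < a ∨ b < q.1) :
    clampB a b r q ∈ LeftEdge a r ∪ RightEdge b r := by
  have hy := clampI_mem (by linarith : (-r : ℝ) ≤ r) q.2
  rcases hq with hq | hq
  · exact Or.inl (mem_LeftEdge.2 ⟨clampI_lo hab hq.le, hy⟩)
  · exact Or.inr (mem_RightEdge.2 ⟨clampI_hi hab hq.le, hy⟩)

lemma clampB_id {a b r : ℝ} {q : ℝ × ℝ} (h : q ∈ HSet a b r) : clampB a b r q = q := by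
  obtain ⟨⟨h1, h2⟩, h3, h4⟩ := mem_HSet.1 h
  rw [clampB, clampI_id h1 h2, clampI_id h3 h4]

-- Bool side machinery
def Eb (a b r : ℝ) : Bool → Set (ℝ × ℝ) := fun c => cond c (RightEdge b r) (LeftEdge a r)
def Sb (a b : ℝ) : Bool → Set (ℝ × ℝ) := fun c => cond c (RightSide b) (LeftSide a)

lemma sideOf {g : ℝ × ℝ → ℝ × ℝ} {a b a' b' r : ℝ} (hcov : CoversH g a b a' b' r) :
    ∃ d : Bool, ∀ c : Bool, ∀ z ∈ Eb a b r c, g z ∈ Sb a' b' (xor c d) := by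
  rcases hcov.2 with ⟨hL, hR⟩ | ⟨hL, hR⟩
  · refine ⟨false, fun c z hz => ?_⟩
    cases c
    · exact hL (Set.mem_image_of_mem g hz)
    · exact hR (Set.mem_image_of_mem g hz)
  · refine ⟨true, fun c z hz => ?_⟩
    cases c
    · exact hL (Set.mem_image_of_mem g hz)
    · exact hR (Set.mem_image_of_mem g hz)

lemma clampB_side {a b r : ℝ} (hab : a ≤ b) (hr : 0 < r) :
    ∀ c : Bool, ∀ q ∈ Sb a b c, clampB a b r q ∈ Eb a b r c := by
  intro c q hq
  cases c
  · exact mem_LeftEdge.2 ⟨clampI_lo hab (mem_LeftSide.1 hq).le,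
      clampI_mem (by linarith) q.2⟩
  · exact mem_RightEdge.2 ⟨clampI_hi hab (mem_RightSide.1 hq).le,
      clampI_mem (by linarith) q.2⟩


end CoverHelpers

open Set in
/-- If disjoint h-sets `N₀, N₂` satisfy `N₀ ⟹ N₂`, `N₂ ⟹ N₂` (for `f`) and
`N₂ ⟹ N₀` for `f³`, then `f` has a fixed point and, for every `n ≥ 5`, a
periodic point of least period exactly `n` which starts in `int N₀` and whose
itinerary positions in `N₂` lie in `int N₂`. -/
theorem stmt_10 (f : ℝ × ℝ → ℝ × ℝ) (hf : Continuous f)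
    (a₀ b₀ a₂ b₂ r : ℝ) (h₀ : a₀ ≤ b₀) (h₂ : a₂ ≤ b₂) (hr : 0 < r)
    (hdisj : Disjoint (HSet a₀ b₀ r) (HSet a₂ b₂ r))
    (hc02 : CoversH f a₀ b₀ a₂ b₂ r)
    (hc22 : CoversH f a₂ b₂ a₂ b₂ r)
    (hc20 : CoversH (f^[3]) a₂ b₂ a₀ b₀ r) :
    (∃ x : ℝ × ℝ, f x = x) ∧
    ∀ n : ℕ, 5 ≤ n → ∃ x : ℝ × ℝ, Function.minimalPeriod f x = n ∧
      x ∈ interior (HSet a₀ b₀ r) ∧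
      ∀ j : ℕ, 1 ≤ j → j ≤ n - 3 → f^[j] x ∈ interior (HSet a₂ b₂ r) := by
  have hrr : (-r : ℝ) ≤ r := by linarith
  constructor
  · -- fixed point
    set Φ := fun p => clampY r (f p) with hΦdef
    have hΦc : Continuous Φ := (clampY_cont r).comp hf
    have hΦ1 : ∀ q, (Φ q).1 = (f q).1 := fun q => rfl
    have hx : (∀ y ∈ Set.Icc (-r) r, (Φ (a₂, y)).1 < a₂ ∧ b₂ < (Φ (b₂, y)).1)
        ∨ (∀ y ∈ Set.Icc (-r) r, b₂ < (Φ (a₂, y)).1 ∧ (Φ (b₂, y)).1 < a₂) := by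
      rcases hc22.2 with ⟨hL, hR⟩ | ⟨hL, hR⟩
      · left; intro y hy'
        constructor
        · rw [hΦ1]
          exact mem_LeftSide.1 (hL (Set.mem_image_of_mem f
            (mem_LeftEdge.2 ⟨rfl, Set.mem_Icc.1 hy'⟩)))
        · rw [hΦ1]
          exact mem_RightSide.1 (hR (Set.mem_image_of_mem f
            (mem_RightEdge.2 ⟨rfl, Set.mem_Icc.1 hy'⟩)))
      · right; intro y hy'
        constructor
        · rw [hΦ1]
          exact mem_RightSide.1 (hL (Set.mem_image_of_mem f
            (mem_LeftEdge.2 ⟨rfl, Set.mem_Icc.1 hy'⟩)))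
        · rw [hΦ1]
          exact mem_LeftSide.1 (hR (Set.mem_image_of_mem f
            (mem_RightEdge.2 ⟨rfl, Set.mem_Icc.1 hy'⟩)))
    obtain ⟨p, hpR, hfix⟩ := mirandaR Φ hΦc a₂ b₂ (-r) r h₂ hrr
      (fun p => clampI_mem hrr _) hx
    have hp0 : p ∈ HSet a₂ b₂ r := hpR
    have hfix1 : (f p).1 = p.1 := by
      rw [← hΦ1 p]; exact congrArg Prod.fst hfix
    have hpx := (mem_HSet.1 hp0).1
    obtain ⟨hmem, hy1, hy2⟩ := cover_strip hc22 hp0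
      (by rw [hfix1]; exact hpx.1) (by rw [hfix1]; exact hpx.2)
    refine ⟨p, ?_⟩
    have hid : Φ p = f p := by
      simp only [hΦdef]
      show (((f p).1 : ℝ), clampI (-r) r (f p).2) = f p
      rw [clampI_id hy1.le hy2.le]
    rw [← hid]; exact hfix
  · -- periodic orbits
    intro n hn
    set K := n - 3 with hKdef
    have hK2 : 2 ≤ K := by omega
    set F := fun p => clampB a₂ b₂ r (f p) with hFdef
    set Φ := fun p => clampY r (f^[3] (F^[K] p)) with hΦdef
    have hFc : Continuous F := (clampB_cont a₂ b₂ r).comp hf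
    have hΦc : Continuous Φ := (clampY_cont r).comp ((hf.iterate 3).comp (hFc.iterate K))
    have hΦ1 : ∀ q, (Φ q).1 = (f^[3] (F^[K] q)).1 := fun q => rfl
    obtain ⟨d02, hd02⟩ := sideOf hc02
    obtain ⟨d22, hd22⟩ := sideOf hc22
    obtain ⟨d20, hd20⟩ := sideOf hc20
    have htraj : ∀ k : ℕ, ∃ e : Bool, ∀ c : Bool, ∀ p ∈ Eb a₀ b₀ r c,
        F^[k+1] p ∈ Eb a₂ b₂ r (xor c e) := by
      intro k
      induction k with
      | zero =>
        refine ⟨d02, fun c p hp => ?_⟩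
        rw [Function.iterate_one]
        exact clampB_side h₂ hr _ _ (hd02 c p hp)
      | succ k ih =>
        obtain ⟨e, he⟩ := ih
        refine ⟨xor e d22, fun c p hp => ?_⟩
        rw [Function.iterate_succ_apply']
        have h2 := clampB_side h₂ hr _ _ (hd22 (xor c e) _ (he c p hp))
        rwa [Bool.xor_assoc] at h2
    obtain ⟨e, he⟩ := htraj (K - 1)
    rw [show K - 1 + 1 = K by omega] at he
    have hside : ∀ c : Bool, ∀ p ∈ Eb a₀ b₀ r c,
        f^[3] (F^[K] p) ∈ Sb a₀ b₀ (xor c (xor e d20)) := by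
      intro c p hp
      have h2 := hd20 (xor c e) _ (he c p hp)
      rwa [Bool.xor_assoc] at h2
    have hx : (∀ y ∈ Set.Icc (-r) r, (Φ (a₀, y)).1 < a₀ ∧ b₀ < (Φ (b₀, y)).1)
        ∨ (∀ y ∈ Set.Icc (-r) r, b₀ < (Φ (a₀, y)).1 ∧ (Φ (b₀, y)).1 < a₀) := by
      cases hef : xor e d20
      · left; intro y hy'
        have h1 := hside false (a₀, y) (mem_LeftEdge.2 ⟨rfl, Set.mem_Icc.1 hy'⟩)
        have h2 := hside true (b₀, y) (mem_RightEdge.2 ⟨rfl, Set.mem_Icc.1 hy'⟩)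
        rw [hef] at h1 h2
        exact ⟨by rw [hΦ1]; exact mem_LeftSide.1 h1, by rw [hΦ1]; exact mem_RightSide.1 h2⟩
      · right; intro y hy'
        have h1 := hside false (a₀, y) (mem_LeftEdge.2 ⟨rfl, Set.mem_Icc.1 hy'⟩)
        have h2 := hside true (b₀, y) (mem_RightEdge.2 ⟨rfl, Set.mem_Icc.1 hy'⟩)
        rw [hef] at h1 h2
        exact ⟨by rw [hΦ1]; exact mem_RightSide.1 h1, by rw [hΦ1]; exact mem_LeftSide.1 h2⟩
    obtain ⟨p, hpR, hfix⟩ := mirandaR Φ hΦc a₀ b₀ (-r) r h₀ hrr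
      (fun p => clampI_mem hrr _) hx
    have hp0 : p ∈ HSet a₀ b₀ r := hpR
    have hfix1 : (f^[3] (F^[K] p)).1 = p.1 := by
      rw [← hΦ1 p]; exact congrArg Prod.fst hfix
    have hbadstep : ∀ w, w ∈ LeftEdge a₂ r ∪ RightEdge b₂ r →
        F w ∈ LeftEdge a₂ r ∪ RightEdge b₂ r :=
      fun w hw => clampB_edge h₂ hr (cover_push hc22 hw)
    have hbadprop : ∀ j k, F^[k] p ∈ LeftEdge a₂ r ∪ RightEdge b₂ r →
        F^[k+j] p ∈ LeftEdge a₂ r ∪ RightEdge b₂ r := by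
      intro j
      induction j with
      | zero => exact fun k h => h
      | succ j ih =>
        intro k h
        rw [show k + (j+1) = (k+j) + 1 by omega, Function.iterate_succ_apply']
        exact hbadstep _ (ih k h)
    have hnb : ∀ k, k ≤ K → F^[k] p ∉ LeftEdge a₂ r ∪ RightEdge b₂ r := by
      intro k hk hbad
      have h1 := hbadprop (K - k) k hbad
      rw [show k + (K - k) = K by omega] at h1
      rcases cover_push hc20 h1 with h | h
      · rw [hfix1] at h; linarith [(mem_HSet.1 hp0).1.1]
      · rw [hfix1] at h; linarith [(mem_HSet.1 hp0).1.2]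
    have hchain : ∀ k, k ≤ K → F^[k] p = f^[k] p ∧
        (1 ≤ k → f^[k] p ∈ HSet a₂ b₂ r ∧ -r < (f^[k] p).2 ∧ (f^[k] p).2 < r) := by
      intro k
      induction k with
      | zero => exact fun _ => ⟨rfl, by omega⟩
      | succ k ih =>
        intro hk1
        obtain ⟨heq, hmem⟩ := ih (by omega)
        set w := f (F^[k] p) with hwdef
        have hFsucc : F^[k+1] p = clampB a₂ b₂ r w := by
          rw [Function.iterate_succ_apply']
        have hwit : f^[k+1] p = w := by
          rw [Function.iterate_succ_apply', ← heq]
        by_cases hcase : a₂ ≤ w.1 ∧ w.1 ≤ b₂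
        · have hw : w ∈ HSet a₂ b₂ r ∧ -r < w.2 ∧ w.2 < r := by
            rcases Nat.eq_zero_or_pos k with rfl | hkpos
            · have hp' : F^[0] p = p := rfl
              rw [hwdef, hp']
              rw [hwdef, hp'] at hcase
              exact cover_strip hc02 hp0 hcase.1 hcase.2
            · have hz : F^[k] p ∈ HSet a₂ b₂ r := by rw [heq]; exact (hmem hkpos).1
              exact cover_strip hc22 hz hcase.1 hcase.2
          refine ⟨?_, fun _ => by rw [hwit]; exact hw⟩
          rw [hFsucc, clampB_id hw.1, ← hwit]
        · exfalso
          apply hnb (k+1) hk1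
          rw [hFsucc]
          apply clampB_edge h₂ hr
          rcases lt_or_ge w.1 a₂ with h | h
          · exact Or.inl h
          · exact Or.inr (lt_of_not_ge fun hh => hcase ⟨h, hh⟩)
    have hzK := hchain K le_rfl
    have hKmem : f^[K] p ∈ HSet a₂ b₂ r := (hzK.2 (by omega)).1
    have hfix1' : (f^[3] (f^[K] p)).1 = p.1 := by rw [← hzK.1]; exact hfix1
    obtain ⟨hw3mem, hw3y1, hw3y2⟩ := cover_strip hc20 hKmem
      (by rw [hfix1']; exact (mem_HSet.1 hp0).1.1)
      (by rw [hfix1']; exact (mem_HSet.1 hp0).1.2)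
    have h5 : f^[3] (f^[K] p) = p := by
      have hclamp := hfix
      simp only [hΦdef] at hclamp
      rw [hzK.1] at hclamp
      rw [clampY, clampI_id hw3y1.le hw3y2.le] at hclamp
      exact hclamp
    have hfp : f^[n] p = p := by
      rw [show n = 3 + K by omega, Function.iterate_add_apply]
      exact h5
    -- strictness for p
    have hpy : -r < p.2 ∧ p.2 < r := by
      constructor
      · rw [← h5]; exact hw3y1
      · rw [← h5]; exact hw3y2
    have hpedge : p ∉ LeftEdge a₀ r ∪ RightEdge b₀ r := by
      intro hbad
      apply hnb 1 (by omega)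
      rw [Function.iterate_one, hFdef]
      exact clampB_edge h₂ hr (cover_push hc02 hbad)
    have hpx : a₀ < p.1 ∧ p.1 < b₀ := by
      obtain ⟨⟨h1, h2⟩, h3, h4⟩ := mem_HSet.1 hp0
      constructor
      · rcases eq_or_lt_of_le h1 with h | h
        · exact absurd (Or.inl (mem_LeftEdge.2 ⟨h.symm, h3, h4⟩)) hpedge
        · exact h
      · rcases eq_or_lt_of_le h2 with h | h
        · exact absurd (Or.inr (mem_RightEdge.2 ⟨h, h3, h4⟩)) hpedge
        · exact h
    -- strictness for orbit
    have horb : ∀ j, 1 ≤ j → j ≤ K → f^[j] p ∈ interior (HSet a₂ b₂ r) := by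
      intro j hj1 hjK
      obtain ⟨heq, hmem⟩ := hchain j hjK
      obtain ⟨hm, hy1, hy2⟩ := hmem hj1
      obtain ⟨⟨h1, h2⟩, h3, h4⟩ := mem_HSet.1 hm
      have hxs : a₂ < (f^[j] p).1 ∧ (f^[j] p).1 < b₂ := by
        constructor
        · rcases eq_or_lt_of_le h1 with h | h
          · exact absurd (by rw [heq]; exact Or.inl (mem_LeftEdge.2 ⟨h.symm, h3, h4⟩))
              (hnb j hjK)
          · exact h
        · rcases eq_or_lt_of_le h2 with h | h
          · exact absurd (by rw [heq]; exact Or.inr (mem_RightEdge.2 ⟨h, h3, h4⟩))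
              (hnb j hjK)
          · exact h
      rw [HSet, interior_prod_eq, interior_Icc, interior_Icc]
      exact ⟨⟨hxs.1, hxs.2⟩, ⟨hy1, hy2⟩⟩
    -- minimal period
    have hper : Function.IsPeriodicPt f n p := hfp
    have hdvd := hper.minimalPeriod_dvd
    have hpos : 0 < Function.minimalPeriod f p := hper.minimalPeriod_pos (by omega)
    have hminp : Function.minimalPeriod f p = n := by
      by_contra hne
      have hlt : Function.minimalPeriod f p < n :=
        lt_of_le_of_ne (Nat.le_of_dvd (by omega) hdvd) hne
      set m := Function.minimalPeriod f p with hmdef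
      obtain ⟨k, hk⟩ := hdvd
      have hk2 : 2 ≤ k := by
        rcases k with _ | _ | k
        · omega
        · omega
        · omega
      have h2m : 2 * m ≤ n := by
        calc 2 * m = m * 2 := by ring
          _ ≤ m * k := Nat.mul_le_mul_left m hk2
          _ = n := hk.symm
      have hmK : m ≤ K := by omega
      have hm1 : 1 ≤ m := hpos
      have hpm : f^[m] p = p := Function.iterate_minimalPeriod
      have := (hchain m hmK).2 hm1
      rw [hpm] at this
      exact Set.disjoint_left.1 hdisj hp0 this.1
    refine ⟨p, hminp, ?_, fun j hj1 hj2 => horb j hj1 hj2⟩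
    rw [HSet, interior_prod_eq, interior_Icc, interior_Icc]
    exact ⟨⟨hpx.1, hpx.2⟩, ⟨hpy.1, hpy.2⟩⟩
end

section
/- Let f : ℝ → ℝ be continuous with a periodic orbit of least period 3. Then for every n ∈ ℕ, n ≥ 1, f has a periodic point of least period n. -/
open Set Function

/-- If `f` maps `Icc a b` onto a superset of itself, it has a fixed point there. -/
private lemma ivt_fix (f : ℝ → ℝ) (hf : Continuous f) {a b : ℝ} (hab : a ≤ b)
    (h : Icc a b ⊆ f '' Icc a b) : ∃ x ∈ Icc a b, f x = x := by
  obtain ⟨x0, hx0, hfx0⟩ := h (left_mem_Icc.2 hab)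
  obtain ⟨x1, hx1, hfx1⟩ := h (right_mem_Icc.2 hab)
  have hc : ContinuousOn (fun t => f t - t) (uIcc x0 x1) :=
    (hf.sub continuous_id).continuousOn
  have h0 : (0:ℝ) ∈ uIcc (f x0 - x0) (f x1 - x1) := by
    rw [hfx0, hfx1, Set.mem_uIcc]
    exact Or.inl ⟨by linarith [hx0.1], by linarith [hx1.2]⟩
  obtain ⟨z, hz, hz0⟩ := intermediate_value_uIcc hc h0
  have hz0' : f z - z = 0 := hz0
  refine ⟨z, ?_, by linarith⟩
  have : uIcc x0 x1 ⊆ Icc a b := by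
    rw [Set.uIcc_eq_union]
    exact Set.union_subset (Icc_subset_Icc hx0.1 hx1.2) (Icc_subset_Icc hx1.1 hx0.2)
  exact this hz

/-- Core covering lemma: if `f x = c`, `f y = d` with `x ≤ y`, `c ≤ d`, then some
subinterval of `[x, y]` is mapped exactly onto `[c, d]`. -/
private lemma cover_core (f : ℝ → ℝ) (hf : Continuous f) {x y c d : ℝ} (hxy : x ≤ y)
    (hcd : c ≤ d) (hfx : f x = c) (hfy : f y = d) :
    ∃ a' b', x ≤ a' ∧ a' ≤ b' ∧ b' ≤ y ∧ f '' Icc a' b' = Icc c d := by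
  have hSc : IsCompact (Icc x y ∩ f ⁻¹' {d}) :=
    isCompact_Icc.inter_right (isClosed_singleton.preimage hf)
  obtain ⟨b', hb'⟩ := hSc.exists_isLeast ⟨y, right_mem_Icc.2 hxy, hfy⟩
  obtain ⟨⟨hb'xy, hb'd⟩, hb'least⟩ := hb'
  have hfb' : f b' = d := hb'd
  have hTc : IsCompact (Icc x b' ∩ f ⁻¹' {c}) :=
    isCompact_Icc.inter_right (isClosed_singleton.preimage hf)
  obtain ⟨a', ha'⟩ := hTc.exists_isGreatest ⟨x, left_mem_Icc.2 hb'xy.1, hfx⟩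
  obtain ⟨⟨ha'xb, ha'c⟩, ha'greatest⟩ := ha'
  have hfa' : f a' = c := ha'c
  refine ⟨a', b', ha'xb.1, ha'xb.2, hb'xy.2, ?_⟩
  apply Subset.antisymm
  · rintro _ ⟨t, ht, rfl⟩
    constructor
    · by_contra hlt
      push_neg at hlt
      have hsub : Icc (f t) (f b') ⊆ f '' Icc t b' :=
        intermediate_value_Icc ht.2 hf.continuousOn
      obtain ⟨u, hu, hfu⟩ := hsub ⟨le_of_lt hlt, by rw [hfb']; exact hcd⟩
      have hu' : u ≤ a' := ha'greatest ⟨⟨le_trans ha'xb.1 (le_trans ht.1 hu.1), hu.2⟩, hfu⟩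
      have htu : t = u := le_antisymm hu.1 (by linarith [ht.1])
      rw [← htu] at hfu
      linarith
    · by_contra hgt
      push_neg at hgt
      have hsub : Icc (f x) (f t) ⊆ f '' Icc x t :=
        intermediate_value_Icc (le_trans ha'xb.1 ht.1) hf.continuousOn
      obtain ⟨u, hu, hfu⟩ := hsub ⟨by rw [hfx]; exact hcd, le_of_lt hgt⟩
      have hu' : b' ≤ u := hb'least ⟨⟨hu.1, le_trans hu.2 (le_trans ht.2 hb'xy.2)⟩, hfu⟩
      have htu : t = u := le_antisymm (by linarith [ht.2, hu.2]) (by linarith [ht.2, hu.2])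
      rw [← htu] at hfu
      linarith
  · have := intermediate_value_Icc ha'xb.2 hf.continuousOn
    rw [hfa', hfb'] at this
    exact this

/-- Covering lemma: if `f '' Icc a b ⊇ Icc c d` then some subinterval of `[a,b]`
is mapped exactly onto `[c,d]`. -/
private lemma cover (f : ℝ → ℝ) (hf : Continuous f) {a b c d : ℝ} (hab : a ≤ b) (hcd : c ≤ d)
    (h : Icc c d ⊆ f '' Icc a b) :
    ∃ a' b', a' ≤ b' ∧ Icc a' b' ⊆ Icc a b ∧ f '' Icc a' b' = Icc c d := by
  obtain ⟨x, hx, hfx⟩ := h ⟨le_refl c, hcd⟩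
  obtain ⟨y, hy, hfy⟩ := h ⟨hcd, le_refl d⟩
  rcases le_total x y with hxy | hyx
  · obtain ⟨a', b', h1, h2, h3, h4⟩ := cover_core f hf hxy hcd hfx hfy
    exact ⟨a', b', h2, Icc_subset_Icc (le_trans hx.1 h1) (le_trans h3 hy.2), h4⟩
  · set g : ℝ → ℝ := fun t => f (x + y - t) with hg_def
    have hg : Continuous g := hf.comp (by continuity)
    have hgy : g y = c := by simp only [hg_def, add_sub_cancel_right, hfx]
    have hgx : g x = d := by simp only [hg_def, add_sub_cancel_left, hfy]
    obtain ⟨a', b', h1, h2, h3, h4⟩ := cover_core g hg hyx hcd hgy hgx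
    refine ⟨x + y - b', x + y - a', by linarith, ?_, ?_⟩
    · apply Icc_subset_Icc <;> [skip; skip] <;> linarith [hy.1, hx.2, hy.2, hx.1]
    · have himg : Icc (x + y - b') (x + y - a') = (fun t => (x + y) - t) '' Icc a' b' := by
        rw [Set.image_const_sub_Icc]
      rw [himg, ← Set.image_comp]
      exact h4

/-- Chain/itinerary lemma: given a finite chain of intervals each covering the next,
there is a subinterval of the first whose iterates track the chain and whose `n`-th
image is exactly the last interval. -/
private lemma chain (f : ℝ → ℝ) (hf : Continuous f) :
    ∀ (n : ℕ) (g : ℕ → ℝ × ℝ), (∀ i, i ≤ n → (g i).1 ≤ (g i).2) →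
    (∀ i, i < n → Icc (g (i+1)).1 (g (i+1)).2 ⊆ f '' Icc (g i).1 (g i).2) →
    ∃ a b, a ≤ b ∧ (∀ i, i ≤ n → f^[i] '' Icc a b ⊆ Icc (g i).1 (g i).2) ∧
      f^[n] '' Icc a b = Icc (g n).1 (g n).2 := by
  intro n
  induction n with
  | zero =>
    intro g hord _
    exact ⟨(g 0).1, (g 0).2, hord 0 le_rfl,
      fun i hi => by
        interval_cases i
        simp,
      by simp⟩
  | succ n ih =>
    intro g hord hcov
    obtain ⟨a', b', hab', hmem', heq'⟩ := ih (fun i => g (i+1))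
      (fun i hi => hord (i+1) (by omega)) (fun i hi => hcov (i+1) (by omega))
    have hsub : Icc a' b' ⊆ f '' Icc (g 0).1 (g 0).2 := by
      have h0 := hmem' 0 (Nat.zero_le _)
      simp only [Function.iterate_zero, Set.image_id] at h0
      exact fun t ht => hcov 0 (Nat.succ_pos n) (h0 ht)
    obtain ⟨a, b, hab, hsub0, heq⟩ := cover f hf (hord 0 (Nat.zero_le _)) hab' hsub
    refine ⟨a, b, hab, ?_, ?_⟩
    · intro i hi
      match i with
      | 0 => simpa using hsub0
      | (j+1) =>
        rw [Function.iterate_succ, Set.image_comp, heq]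
        exact hmem' j (by omega)
    · rw [Function.iterate_succ, Set.image_comp, heq]
      exact heq'

/-- Abstract key lemma: two intervals `A = Icc a b`, `B = Icc c d` meeting in the
single point `s`, with `f(A) ⊇ A ∪ B`, `f(B) ⊇ A`, and suitable behaviour of `f`
at `s`, force periodic points of every least period. -/
private lemma key_s11 (f : ℝ → ℝ) (hf : Continuous f) {a b c d s : ℝ} (hab : a < b) (hcd : c ≤ d)
    (hAB : Icc a b ∩ Icc c d = {s})
    (hfA : Icc a b ⊆ f '' Icc a b) (hfA' : Icc c d ⊆ f '' Icc a b)
    (hfB : Icc a b ⊆ f '' Icc c d)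
    (hs1 : f s ∈ Icc a b) (hs2 : f s ≠ s) (hs3 : f (f s) ∉ Icc a b) :
    ∀ n : ℕ, 1 ≤ n → ∃ x : ℝ, Function.minimalPeriod f x = n := by
  intro n hn
  rcases eq_or_lt_of_le hn with h1 | h2
  · -- n = 1 : fixed point
    obtain ⟨z, hz, hfz⟩ := ivt_fix f hf hab.le hfA
    exact ⟨z, by rw [← h1, Function.minimalPeriod_eq_one_iff_isFixedPt]; exact hfz⟩
  · -- n ≥ 2
    have hn2 : 2 ≤ n := h2
    set g : ℕ → ℝ × ℝ := fun i => if i = n - 1 then (c, d) else (a, b) with hg_def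
    have hord : ∀ i, i ≤ n → (g i).1 ≤ (g i).2 := by
      intro i _
      by_cases hi : i = n - 1 <;> simp [hg_def, hi, hab.le, hcd]
    have hcov : ∀ i, i < n → Icc (g (i+1)).1 (g (i+1)).2 ⊆ f '' Icc (g i).1 (g i).2 := by
      intro i hi
      by_cases hi' : i = n - 1
      · have : ¬ (i + 1 = n - 1) := by omega
        simpa [hg_def, hi', this] using hfB
      · by_cases hi'' : i + 1 = n - 1
        · simpa [hg_def, hi', hi''] using hfA'
        · simpa [hg_def, hi', hi''] using hfA
    obtain ⟨a', b', hab', hmem, heq⟩ := chain f hf n g hord hcov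
    have hgn : g n = (a, b) := by simp only [hg_def]; exact if_neg (by omega)
    rw [hgn] at heq
    have hself : Icc a' b' ⊆ f^[n] '' Icc a' b' := by
      rw [heq]
      have h0 := hmem 0 (Nat.zero_le _)
      have hg0 : g 0 = (a, b) := by simp only [hg_def]; exact if_neg (by omega)
      rw [hg0] at h0
      simpa using h0
    obtain ⟨x, hx, hfx⟩ := ivt_fix (f^[n]) (hf.iterate n) hab' hself
    have hper : Function.IsPeriodicPt f n x := hfx
    have hA : ∀ i, i ≤ n → i ≠ n - 1 → f^[i] x ∈ Icc a b := by
      intro i hi hi'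
      have := hmem i hi (Set.mem_image_of_mem _ hx)
      simpa [hg_def, hi'] using this
    have hB : f^[n-1] x ∈ Icc c d := by
      have := hmem (n-1) (by omega) (Set.mem_image_of_mem _ hx)
      simpa [hg_def] using this
    refine ⟨x, ?_⟩
    by_contra hne
    have hdvd : Function.minimalPeriod f x ∣ n := hper.minimalPeriod_dvd
    have hpos : 0 < Function.minimalPeriod f x := hper.minimalPeriod_pos (by omega)
    have hlt : Function.minimalPeriod f x < n :=
      lt_of_le_of_ne (Nat.le_of_dvd (by omega) hdvd) hne
    set m := Function.minimalPeriod f x with hm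
    -- f^[n-1] x lands in A as well, hence equals s
    have hmod : f^[(n-1) % m] x = f^[n-1] x := Function.iterate_mod_minimalPeriod_eq
    have hmodlt : (n-1) % m ≤ n - 2 := by
      have := Nat.mod_lt (n-1) hpos
      omega
    have hAn1 : f^[n-1] x ∈ Icc a b := by
      rw [← hmod]
      exact hA _ (by omega) (by omega)
    have hss : f^[n-1] x = s := by
      have : f^[n-1] x ∈ Icc a b ∩ Icc c d := ⟨hAn1, hB⟩
      rwa [hAB, Set.mem_singleton_iff] at this
    have hxfs : x = f s := by
      have : f^[n] x = f (f^[n-1] x) := by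
        conv_lhs => rw [show n = (n-1) + 1 by omega]
        rw [Function.iterate_succ_apply']
      rw [hper.eq, hss] at this
      exact this
    rcases eq_or_lt_of_le hn2 with hn2' | hn3
    · -- n = 2 : then m = 1, so x is fixed, so s = x and f s = s, contradiction
      have hm1 : m = 1 := by omega
      have hfix : f x = x := by
        have := Function.isPeriodicPt_minimalPeriod f x
        rwa [← hm, hm1] at this
      have hxs : x = s := by
        have : f^[n-1] x = f x := by rw [show n - 1 = 1 by omega]; simp
        rw [this, hfix] at hss
        exact hss
      exact hs2 (by rw [← hxs]; exact hfix)
    · -- n ≥ 3 : f x = f (f s) ∉ A, but f x ∈ A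
      have hfxA : f x ∈ Icc a b := by
        have := hA 1 (by omega) (by omega)
        simpa using this
      rw [hxfs] at hfxA
      exact hs3 hfxA

/-- Case 1: cycle `p → q → r → p` with `p < q < r`. -/
private lemma case1 (f : ℝ → ℝ) (hf : Continuous f) {p q r : ℝ}
    (hpq : p < q) (hqr : q < r) (h1 : f p = q) (h2 : f q = r) (h3 : f r = p) :
    ∀ n : ℕ, 1 ≤ n → ∃ x : ℝ, Function.minimalPeriod f x = n := by
  have hfA : Icc p r ⊆ f '' Icc q r := by
    have := intermediate_value_Icc' hqr.le hf.continuousOn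
    rwa [h2, h3] at this
  have hfB : Icc q r ⊆ f '' Icc p q := by
    have := intermediate_value_Icc hpq.le hf.continuousOn
    rwa [h1, h2] at this
  refine key_s11 f hf (s := q) hqr hpq.le ?_ ?_ ?_ hfB ?_ ?_ ?_
  · rw [Set.Icc_inter_Icc]
    rw [max_eq_left hpq.le, min_eq_right hqr.le, Set.Icc_self]
  · exact fun t ht => hfA ⟨le_trans hpq.le ht.1, ht.2⟩
  · exact fun t ht => hfA ⟨ht.1, le_trans ht.2 hqr.le⟩
  · rw [h2]; exact ⟨hqr.le, le_refl r⟩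
  · rw [h2]; exact ne_of_gt hqr
  · rw [h2, h3]; intro h; exact absurd h.1 (not_le.2 hpq)

/-- Case 2: cycle `p → r → q → p` with `p < q < r`. -/
private lemma case2 (f : ℝ → ℝ) (hf : Continuous f) {p q r : ℝ}
    (hpq : p < q) (hqr : q < r) (h1 : f p = r) (h2 : f q = p) (h3 : f r = q) :
    ∀ n : ℕ, 1 ≤ n → ∃ x : ℝ, Function.minimalPeriod f x = n := by
  have hfA : Icc p r ⊆ f '' Icc p q := by
    have := intermediate_value_Icc' hpq.le hf.continuousOn
    rwa [h1, h2] at this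
  have hfB : Icc p q ⊆ f '' Icc q r := by
    have := intermediate_value_Icc hqr.le hf.continuousOn
    rwa [h2, h3] at this
  refine key_s11 f hf (s := q) hpq hqr.le ?_ ?_ ?_ hfB ?_ ?_ ?_
  · rw [Set.Icc_inter_Icc]
    rw [max_eq_right hpq.le, min_eq_left hqr.le, Set.Icc_self]
  · exact fun t ht => hfA ⟨ht.1, le_trans ht.2 hqr.le⟩
  · exact fun t ht => hfA ⟨le_trans hpq.le ht.1, ht.2⟩
  · rw [h2]; exact ⟨le_refl p, hpq.le⟩
  · rw [h2]; exact ne_of_lt hpq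
  · rw [h2, h1]; intro h; exact absurd h.2 (not_le.2 hqr)

/-- Period 3 implies all periods: a continuous map of the real line with a
periodic orbit of least period 3 has periodic points of every least period `n ≥ 1`. -/
theorem stmt_11 (f : ℝ → ℝ) (hf : Continuous f)
    (h3 : ∃ x : ℝ, Function.minimalPeriod f x = 3) :
    ∀ n : ℕ, 1 ≤ n → ∃ x : ℝ, Function.minimalPeriod f x = n := by
  obtain ⟨x, hx⟩ := h3
  have hper : Function.IsPeriodicPt f 3 x := by
    rw [← hx]; exact Function.isPeriodicPt_minimalPeriod f x
  set x0 := x with hx0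
  set x1 := f x with hx1
  set x2 := f (f x) with hx2
  have h30 : f x2 = x0 := by
    have h : f^[3] x = x := hper
    show f (f (f x)) = x
    rw [show (3:ℕ) = 2 + 1 from rfl, Function.iterate_succ_apply'] at h
    rw [show (2:ℕ) = 1 + 1 from rfl, Function.iterate_succ_apply'] at h
    rw [Function.iterate_one] at h
    exact h
  have ne01 : x0 ≠ x1 := by
    intro h
    have : Function.IsPeriodicPt f 1 x := by
      show f^[1] x = x
      rw [Function.iterate_one]
      exact h.symm
    have := this.minimalPeriod_dvd
    rw [hx] at this
    omega
  have ne02 : x0 ≠ x2 := by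
    intro h
    have : Function.IsPeriodicPt f 2 x := by
      show f^[2] x = x
      rw [show (2:ℕ) = 1 + 1 from rfl, Function.iterate_succ_apply', Function.iterate_one]
      exact h.symm
    have := this.minimalPeriod_dvd
    rw [hx] at this
    omega
  have ne12 : x1 ≠ x2 := by
    intro h
    apply ne01
    calc x0 = f x2 := h30.symm
    _ = f x1 := by rw [← h]
    _ = x2 := rfl
    _ = x1 := h.symm
  have h01 : f x0 = x1 := rfl
  have h12 : f x1 = x2 := rfl
  rcases lt_trichotomy x0 x1 with h01' | h01' | h01'
  · rcases lt_trichotomy x1 x2 with h12' | h12' | h12'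
    · exact case1 f hf h01' h12' h01 h12 h30
    · exact absurd h12' ne12
    · rcases lt_trichotomy x0 x2 with h02' | h02' | h02'
      · -- x0 < x2 < x1
        exact case2 f hf h02' h12' h01 h30 h12
      · exact absurd h02' ne02
      · -- x2 < x0 < x1
        exact case1 f hf h02' h01' h30 h01 h12
  · exact absurd h01' ne01
  · rcases lt_trichotomy x1 x2 with h12' | h12' | h12'
    · rcases lt_trichotomy x0 x2 with h02' | h02' | h02'
      · -- x1 < x0 < x2
        exact case2 f hf h01' h02' h12 h01 h30
      · exact absurd h02' ne02
      · -- x1 < x2 < x0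
        exact case1 f hf h12' h02' h12 h30 h01
    · exact absurd h12' ne12
    · -- x2 < x1 < x0
      exact case2 f hf h12' h01' h30 h12 h01
end

section
/- Let f : ℝ → ℝ be continuous and let I₀, I₁, I₂, I₃ be compact intervals satisfying the covering diagram: I₀ f-covers I₂ and I₃; I₂ f-covers I₂ and I₁; I₁ f-covers I₃; I₃ f-covers I₀. Then f has a point x ∈ I₀ with f²(x) = x (from the loop I₀ → I₃ → I₀) and a point y ∈ I₁ with f⁴(y) = y and itinerary I₁ → I₃ → I₀ → I₂ → I₁. -/
/-- `I` `g`-covers `J`: there is a compact subinterval `K = [a,b] ⊆ I` with `g(K) = J`. -/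
def Covers (g : ℝ → ℝ) (I J : Set ℝ) : Prop :=
  ∃ a b : ℝ, a ≤ b ∧ Set.Icc a b ⊆ I ∧ g '' Set.Icc a b = J

/-- Helper: if `f u = s`, `f v = t` with `u ≤ v`, `s ≤ t`, then some subinterval of
`[u,v]` maps exactly onto `[s,t]`. -/
lemma helperH (f : ℝ → ℝ) (hf : Continuous f) {u v s t : ℝ} (huv : u ≤ v)
    (hs : f u = s) (ht : f v = t) (hst : s ≤ t) :
    ∃ a' b', u ≤ a' ∧ a' ≤ b' ∧ b' ≤ v ∧ f '' Set.Icc a' b' = Set.Icc s t := by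
  set A : Set ℝ := {x | x ∈ Set.Icc u v ∧ f x = s} with hA
  have hAcl : IsClosed A := (isClosed_Icc.inter (isClosed_eq hf continuous_const))
  have hAne : A.Nonempty := ⟨u, ⟨le_refl u, huv⟩, hs⟩
  have hAbdd : BddAbove A := ⟨v, fun x hx => hx.1.2⟩
  set a' := sSup A with ha'
  have ha'A : a' ∈ A := hAcl.csSup_mem hAne hAbdd
  have ha'u : u ≤ a' := ha'A.1.1
  have ha'v : a' ≤ v := ha'A.1.2
  have hfa' : f a' = s := ha'A.2
  set B : Set ℝ := {x | x ∈ Set.Icc a' v ∧ f x = t} with hB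
  have hBcl : IsClosed B := (isClosed_Icc.inter (isClosed_eq hf continuous_const))
  have hBne : B.Nonempty := ⟨v, ⟨ha'v, le_refl v⟩, ht⟩
  have hBbdd : BddBelow B := ⟨a', fun x hx => hx.1.1⟩
  set b' := sInf B with hb'
  have hb'B : b' ∈ B := hBcl.csInf_mem hBne hBbdd
  have hab' : a' ≤ b' := hb'B.1.1
  have hb'v : b' ≤ v := hb'B.1.2
  have hfb' : f b' = t := hb'B.2
  refine ⟨a', b', ha'u, hab', hb'v, Set.Subset.antisymm ?_ ?_⟩
  · rintro y ⟨x, hx, rfl⟩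
    constructor
    · by_contra h
      push_neg at h
      have hivt := intermediate_value_Icc hx.2 hf.continuousOn
      have hmem : s ∈ Set.Icc (f x) (f b') := ⟨h.le, by rw [hfb']; exact hst⟩
      obtain ⟨z, hz, hfz⟩ := hivt hmem
      have hzA : z ∈ A := ⟨⟨le_trans ha'u (le_trans hx.1 hz.1),
        le_trans hz.2 hb'v⟩, hfz⟩
      have hza : z ≤ a' := le_csSup hAbdd hzA
      have hxa : x = a' := le_antisymm (hz.1.trans hza) hx.1
      rw [hxa, hfa'] at h
      exact lt_irrefl s h
    · by_contra h
      push_neg at h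
      have hivt := intermediate_value_Icc hx.1 hf.continuousOn
      have hmem : t ∈ Set.Icc (f a') (f x) := ⟨by rw [hfa']; exact hst, h.le⟩
      obtain ⟨z, hz, hfz⟩ := hivt hmem
      have hzB : z ∈ B := ⟨⟨hz.1, (hz.2.trans hx.2).trans hb'v⟩, hfz⟩
      have hbz : b' ≤ z := csInf_le hBbdd hzB
      have hxb : x = b' := le_antisymm hx.2 (hbz.trans hz.2)
      rw [hxb, hfb'] at h
      exact lt_irrefl t h
  · have := intermediate_value_Icc hab' hf.continuousOn
    rw [hfa', hfb'] at this
    exact this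

/-- Pullback: if `f` maps `[a,b]` onto `[c,d]` and `[c',d'] ⊆ [c,d]`, then some
subinterval of `[a,b]` maps exactly onto `[c',d']`. -/
lemma pull (f : ℝ → ℝ) (hf : Continuous f) {a b c d c' d' : ℝ} (hab : a ≤ b)
    (him : f '' Set.Icc a b = Set.Icc c d) (hc'd' : c' ≤ d')
    (hsub : Set.Icc c' d' ⊆ Set.Icc c d) :
    ∃ a' b', a' ≤ b' ∧ Set.Icc a' b' ⊆ Set.Icc a b ∧
      f '' Set.Icc a' b' = Set.Icc c' d' := by
  have hc' : c' ∈ f '' Set.Icc a b := him ▸ hsub ⟨le_refl c', hc'd'⟩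
  have hd' : d' ∈ f '' Set.Icc a b := him ▸ hsub ⟨hc'd', le_refl d'⟩
  obtain ⟨p, hp, hfp⟩ := hc'
  obtain ⟨q, hq, hfq⟩ := hd'
  rcases le_or_gt p q with hpq | hqp
  · obtain ⟨a', b', h1, h2, h3, h4⟩ := helperH f hf hpq hfp hfq hc'd'
    exact ⟨a', b', h2, Set.Icc_subset_Icc (hp.1.trans h1) (h3.trans hq.2), h4⟩
  · obtain ⟨α, β, h1, h2, h3, h4⟩ :=
      helperH (fun x => f (-x)) (hf.comp continuous_neg)
        (neg_le_neg hqp.le) (by simp [hfp]) (by simp [hfq]) hc'd'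
    refine ⟨-β, -α, neg_le_neg h2, Set.Icc_subset_Icc ?_ ?_, ?_⟩
    · have : q ≤ -β := le_neg_of_le_neg h3
      exact hq.1.trans this
    · have : -α ≤ p := neg_le_of_neg_le h1
      exact this.trans hp.2
    · rw [← h4]
      ext y
      simp only [Set.mem_image, Set.mem_Icc]
      constructor
      · rintro ⟨x, hx, rfl⟩
        exact ⟨-x, ⟨by linarith [hx.2], le_of_neg_le_neg (by simpa using hx.1)⟩, by simp⟩
      · rintro ⟨x, hx, rfl⟩
        exact ⟨-x, ⟨neg_le_neg hx.2, neg_le_neg hx.1⟩, by simp⟩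

/-- Fixed point: if `[a,b] ⊆ g([a,b])` then `g` has a fixed point in `[a,b]`. -/
lemma fixpt (g : ℝ → ℝ) (hg : Continuous g) {a b : ℝ} (hab : a ≤ b)
    (h : Set.Icc a b ⊆ g '' Set.Icc a b) : ∃ x ∈ Set.Icc a b, g x = x := by
  obtain ⟨p, hp, hgp⟩ := h ⟨le_refl a, hab⟩
  obtain ⟨q, hq, hgq⟩ := h ⟨hab, le_refl b⟩
  have hcont : Continuous (fun x => g x - x) := hg.sub continuous_id
  have hivt := intermediate_value_uIcc (a := p) (b := q) hcont.continuousOn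
  have h0 : (0:ℝ) ∈ Set.uIcc (g p - p) (g q - q) := by
    rw [Set.mem_uIcc]
    left
    constructor
    · rw [hgp]; linarith [hp.1]
    · rw [hgq]; linarith [hq.2]
  obtain ⟨x, hx, hfx⟩ := hivt h0
  refine ⟨x, ?_, by linarith [sub_eq_zero.mp hfx]⟩
  have : Set.uIcc p q ⊆ Set.Icc a b := Set.uIcc_subset_Icc hp hq
  exact this hx

/-- From the covering diagram `I₀ → I₂, I₃`; `I₂ → I₂, I₁`; `I₁ → I₃`; `I₃ → I₀`
we get a 2-periodic point in `I₀` (loop `I₀ → I₃ → I₀`) and a 4-periodic point in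
`I₁` with itinerary `I₁ → I₃ → I₀ → I₂ → I₁`. -/
theorem stmt_13 (f : ℝ → ℝ) (hf : Continuous f)
    (a₀ b₀ a₁ b₁ a₂ b₂ a₃ b₃ : ℝ)
    (h₀ : a₀ ≤ b₀) (h₁ : a₁ ≤ b₁) (h₂ : a₂ ≤ b₂) (h₃ : a₃ ≤ b₃)
    (hc02 : Covers f (Set.Icc a₀ b₀) (Set.Icc a₂ b₂))
    (hc03 : Covers f (Set.Icc a₀ b₀) (Set.Icc a₃ b₃))
    (hc22 : Covers f (Set.Icc a₂ b₂) (Set.Icc a₂ b₂))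
    (hc21 : Covers f (Set.Icc a₂ b₂) (Set.Icc a₁ b₁))
    (hc13 : Covers f (Set.Icc a₁ b₁) (Set.Icc a₃ b₃))
    (hc30 : Covers f (Set.Icc a₃ b₃) (Set.Icc a₀ b₀)) :
    (∃ x ∈ Set.Icc a₀ b₀, f^[2] x = x ∧ f x ∈ Set.Icc a₃ b₃) ∧
    (∃ y ∈ Set.Icc a₁ b₁, f^[4] y = y ∧ f y ∈ Set.Icc a₃ b₃ ∧
      f^[2] y ∈ Set.Icc a₀ b₀ ∧ f^[3] y ∈ Set.Icc a₂ b₂) := by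
  constructor
  · -- loop I₀ → I₃ → I₀
    obtain ⟨p3, q3, hpq3, hsub3, him3⟩ := hc30
    obtain ⟨A, B, hAB, hABsub, hABim⟩ := hc03
    obtain ⟨a', b', h1, h2, h3⟩ := pull f hf hAB hABim hpq3 hsub3
    have himage2 : f^[2] '' Set.Icc a' b' = Set.Icc a₀ b₀ := by
      have : f^[2] = f ∘ f := by
        ext x; simp [Function.iterate_succ, Function.comp]
      rw [this, Set.image_comp, h3, him3]
    have hK0sub : Set.Icc a' b' ⊆ Set.Icc a₀ b₀ := h2.trans hABsub
    obtain ⟨x, hx, hfx⟩ := fixpt (f^[2]) (hf.iterate 2) h1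
      (by rw [himage2]; exact hK0sub)
    refine ⟨x, hK0sub hx, hfx, ?_⟩
    have : f x ∈ f '' Set.Icc a' b' := ⟨x, hx, rfl⟩
    rw [h3] at this
    exact hsub3 this
  · -- loop I₁ → I₃ → I₀ → I₂ → I₁
    obtain ⟨p2, q2, hpq2, hsub2, him2⟩ := hc21
    obtain ⟨A0, B0, hAB0, hAB0sub, hAB0im⟩ := hc02
    obtain ⟨p0, q0, hpq0, hK0sub', hK0im⟩ := pull f hf hAB0 hAB0im hpq2 hsub2
    have hK0sub : Set.Icc p0 q0 ⊆ Set.Icc a₀ b₀ := hK0sub'.trans hAB0sub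
    obtain ⟨A3, B3, hAB3, hAB3sub, hAB3im⟩ := hc30
    obtain ⟨p3, q3, hpq3, hK3sub', hK3im⟩ := pull f hf hAB3 hAB3im hpq0 hK0sub
    have hK3sub : Set.Icc p3 q3 ⊆ Set.Icc a₃ b₃ := hK3sub'.trans hAB3sub
    obtain ⟨A1, B1, hAB1, hAB1sub, hAB1im⟩ := hc13
    obtain ⟨p1, q1, hpq1, hK1sub', hK1im⟩ := pull f hf hAB1 hAB1im hpq3 hK3sub
    have hK1sub : Set.Icc p1 q1 ⊆ Set.Icc a₁ b₁ := hK1sub'.trans hAB1sub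
    have himage4 : f^[4] '' Set.Icc p1 q1 = Set.Icc a₁ b₁ := by
      have h4 : f^[4] = f ∘ f ∘ f ∘ f := by
        ext x; simp [Function.iterate_succ, Function.comp]
      rw [h4]
      simp only [Set.image_comp]
      rw [hK1im, hK3im, hK0im, him2]
    obtain ⟨y, hy, hfy⟩ := fixpt (f^[4]) (hf.iterate 4) hpq1
      (by rw [himage4]; exact hK1sub)
    have hfy1 : f y ∈ Set.Icc p3 q3 := by rw [← hK1im]; exact ⟨y, hy, rfl⟩
    have hfy2 : f^[2] y ∈ Set.Icc p0 q0 := by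
      rw [← hK3im]
      exact ⟨f y, hfy1, by simp [Function.iterate_succ, Function.comp]⟩
    have hfy3 : f^[3] y ∈ Set.Icc p2 q2 := by
      rw [← hK0im]
      refine ⟨f^[2] y, hfy2, ?_⟩
      rw [← Function.iterate_succ_apply' f 2 y]
    exact ⟨y, hK1sub hy, hfy, hK3sub hfy1, hK0sub hfy2, hsub2 hfy3⟩
end

section
/- Let N₀ = [a₀,b₀] × [−r,r] and N₁ = [a₁,b₁] × [−r,r] be h-sets and f : ℝ² → ℝ² continuous such that N₀ f-covers N₁ horizontally. Then for every continuous curve γ : [0,1] → N₀ with γ(0) ∈ L(N₀) and γ(1) ∈ R(N₀), the image f ∘ γ intersects N₁; in particular f(N₀) ∩ N₁ ≠ ∅. -/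
/-- If `N₀` f-covers `N₁` horizontally, then the `f`-image of any continuous
curve in `N₀` joining the left edge to the right edge meets `N₁`; in particular
`f(N₀) ∩ N₁ ≠ ∅`. -/
theorem stmt_16 (f : ℝ × ℝ → ℝ × ℝ) (hf : Continuous f)
    (a₀ b₀ a₁ b₁ r : ℝ) (h₀ : a₀ ≤ b₀) (h₁ : a₁ ≤ b₁) (hr : 0 < r)
    (hcov : CoversH f a₀ b₀ a₁ b₁ r) :
    (∀ γ : ℝ → ℝ × ℝ, ContinuousOn γ (Set.Icc 0 1) →
      Set.MapsTo γ (Set.Icc 0 1) (HSet a₀ b₀ r) →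
      γ 0 ∈ LeftEdge a₀ r → γ 1 ∈ RightEdge b₀ r →
      ∃ t ∈ Set.Icc (0 : ℝ) 1, f (γ t) ∈ HSet a₁ b₁ r) ∧
    (f '' HSet a₀ b₀ r ∩ HSet a₁ b₁ r).Nonempty := by
  have key : ∀ p : ℝ × ℝ, p ∈ HSet a₀ b₀ r → (f p).1 ∈ Set.Icc a₁ b₁ →
      f p ∈ HSet a₁ b₁ r := by
    intro p hp hfp
    have h := hcov.1 (Set.mem_image_of_mem f hp)
    rcases h.1 with (hL | hH) | hR
    · exact absurd hL.1 (not_lt.2 hfp.1)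
    · exact hH
    · exact absurd hR.1 (not_lt.2 hfp.2)
  have main : ∀ γ : ℝ → ℝ × ℝ, ContinuousOn γ (Set.Icc 0 1) →
      Set.MapsTo γ (Set.Icc 0 1) (HSet a₀ b₀ r) →
      γ 0 ∈ LeftEdge a₀ r → γ 1 ∈ RightEdge b₀ r →
      ∃ t ∈ Set.Icc (0 : ℝ) 1, f (γ t) ∈ HSet a₁ b₁ r := by
    intro γ hγc hγm hγ0 hγ1
    set φ : ℝ → ℝ := fun t => (f (γ t)).1 with hφ
    have hφc : ContinuousOn φ (Set.Icc 0 1) :=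
      (continuous_fst.comp hf).comp_continuousOn hγc
    have h01 : (0 : ℝ) ≤ 1 := zero_le_one
    rcases hcov.2 with ⟨hL, hR⟩ | ⟨hL, hR⟩
    · have h0 : φ 0 < a₁ := (hL (Set.mem_image_of_mem f hγ0)).1
      have h1 : b₁ < φ 1 := (hR (Set.mem_image_of_mem f hγ1)).1
      have : a₁ ∈ φ '' Set.Icc 0 1 :=
        intermediate_value_Icc h01 hφc ⟨h0.le, h₁.trans h1.le⟩
      obtain ⟨t, ht, hφt⟩ := this
      exact ⟨t, ht, key _ (hγm ht) (by rw [hφ] at hφt; simp [hφt, h₁])⟩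
    · have h0 : b₁ < φ 0 := (hL (Set.mem_image_of_mem f hγ0)).1
      have h1 : φ 1 < a₁ := (hR (Set.mem_image_of_mem f hγ1)).1
      have : a₁ ∈ φ '' Set.Icc 0 1 :=
        intermediate_value_Icc' h01 hφc ⟨h1.le, h₁.trans h0.le⟩
      obtain ⟨t, ht, hφt⟩ := this
      exact ⟨t, ht, key _ (hγm ht) (by rw [hφ] at hφt; simp [hφt, h₁])⟩
  refine ⟨main, ?_⟩
  set γ : ℝ → ℝ × ℝ := fun t => (a₀ + t * (b₀ - a₀), 0) with hγ
  have hγc : ContinuousOn γ (Set.Icc 0 1) := by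
    apply Continuous.continuousOn; fun_prop
  have hmem : ∀ t ∈ Set.Icc (0:ℝ) 1, γ t ∈ HSet a₀ b₀ r := by
    intro t ht
    constructor
    · simp only [hγ]
      constructor
      · nlinarith [ht.1, ht.2]
      · nlinarith [ht.1, ht.2]
    · constructor <;> simp [hγ] <;> linarith
  obtain ⟨t, ht, h⟩ := main γ hγc hmem
    (by simp [hγ, LeftEdge]; linarith)
    (by constructor
        · simp [hγ]
        · simp [hγ]; linarith)
  exact ⟨f (γ t), ⟨γ t, hmem t ht, rfl⟩, h⟩
end

section
/- Let f : ℝ → ℝ be continuous and let I₀, I₁ be compact intervals with I₀ to the left of I₁ (sup I₀ ≤ inf I₁) such that I₀ f-covers I₁, I₁ f-covers I₁, and I₁ f-covers I₀. Then for every n ≥ 2 there exists x ∈ I₀ with f^n(x) = x, f(x) ∈ I₁, …, f^{n-1}(x) ∈ I₁, and if additionally int I₀ ∩ int I₁ = ∅ and x ∈ int I₀, f^j(x) ∈ int I₁ for 1 ≤ j ≤ n−1, then the least period of x equals n. -/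
open Set


private lemma aux_sub (f : ℝ → ℝ) (hf : Continuous f) {u v c d : ℝ}
    (huv : u ≤ v) (hcd : c ≤ d) (hu : f u = c) (hv : f v = d) :
    ∃ a' b', u ≤ a' ∧ a' ≤ b' ∧ b' ≤ v ∧ f '' Icc a' b' = Icc c d := by
  set S : Set ℝ := Icc u v ∩ f ⁻¹' {d} with hS
  have hSclosed : IsClosed S := isClosed_Icc.inter (isClosed_singleton.preimage hf)
  have hSne : S.Nonempty := ⟨v, ⟨huv, le_rfl⟩, hv⟩
  have hSbdd : BddBelow S := ⟨u, fun t ht => ht.1.1⟩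
  set b' := sInf S with hb'
  have hb'S : b' ∈ S := hSclosed.csInf_mem hSne hSbdd
  have hub' : u ≤ b' := hb'S.1.1
  have hb'v : b' ≤ v := hb'S.1.2
  have hfb' : f b' = d := hb'S.2
  set T : Set ℝ := Icc u b' ∩ f ⁻¹' {c} with hT
  have hTclosed : IsClosed T := isClosed_Icc.inter (isClosed_singleton.preimage hf)
  have hTne : T.Nonempty := ⟨u, ⟨le_rfl, hub'⟩, hu⟩
  have hTbdd : BddAbove T := ⟨b', fun t ht => ht.1.2⟩
  set a' := sSup T with ha'
  have ha'T : a' ∈ T := hTclosed.csSup_mem hTne hTbdd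
  have hua' : u ≤ a' := ha'T.1.1
  have ha'b' : a' ≤ b' := ha'T.1.2
  have hfa' : f a' = c := ha'T.2
  refine ⟨a', b', hua', ha'b', hb'v, ?_⟩
  apply Subset.antisymm
  · rintro y ⟨t, ht, rfl⟩
    constructor
    · by_contra h
      push_neg at h
      have htne : a' ≠ t := fun e => by rw [← e, hfa'] at h; exact lt_irrefl _ h
      have hmem : c ∈ Icc (f t) (f b') := ⟨h.le, hfb' ▸ hcd⟩
      obtain ⟨s, hs, hfs⟩ := intermediate_value_Icc ht.2 hf.continuousOn hmem
      have hsT : s ∈ T := ⟨⟨le_trans hua' (le_trans ht.1 hs.1), hs.2⟩, hfs⟩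
      have h1 : s ≤ a' := le_csSup hTbdd hsT
      have h2 : a' < t := lt_of_le_of_ne ht.1 htne
      linarith [hs.1]
    · by_contra h
      push_neg at h
      have htne : t ≠ b' := fun e => by rw [e, hfb'] at h; exact lt_irrefl _ h
      have hmem : d ∈ Icc (f a') (f t) := ⟨hfa' ▸ hcd, h.le⟩
      obtain ⟨s, hs, hfs⟩ := intermediate_value_Icc ht.1 hf.continuousOn hmem
      have hsS : s ∈ S := ⟨⟨le_trans hua' hs.1, le_trans hs.2 (le_trans ht.2 hb'v)⟩, hfs⟩
      have h1 : b' ≤ s := csInf_le hSbdd hsS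
      have h2 : t < b' := lt_of_le_of_ne ht.2 htne
      linarith [hs.2]
  · have h := intermediate_value_Icc ha'b' hf.continuousOn
    rw [hfa', hfb'] at h
    exact h

private lemma covers_sub (f : ℝ → ℝ) (hf : Continuous f) {a b c d : ℝ}
    (hcd : c ≤ d) (h : Icc c d ⊆ f '' Icc a b) :
    ∃ a' b', a ≤ a' ∧ a' ≤ b' ∧ b' ≤ b ∧ f '' Icc a' b' = Icc c d := by
  obtain ⟨u, hu, hfu⟩ := h ⟨le_rfl, hcd⟩
  obtain ⟨v, hv, hfv⟩ := h ⟨hcd, le_rfl⟩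
  rcases le_total u v with huv | hvu
  · obtain ⟨a', b', h1, h2, h3, h4⟩ := aux_sub f hf huv hcd hfu hfv
    exact ⟨a', b', le_trans hu.1 h1, h2, le_trans h3 hv.2, h4⟩
  · set g : ℝ → ℝ := fun t => f (a + b - t) with hg
    have hgc : Continuous g := hf.comp (by continuity)
    have h1 : a + b - u ≤ a + b - v := by linarith
    have hgu : g (a + b - u) = c := by simp [hg, hfu]
    have hgv : g (a + b - v) = d := by simp [hg, hfv]
    obtain ⟨a', b', k1, k2, k3, k4⟩ := aux_sub g hgc h1 hcd hgu hgv
    refine ⟨a + b - b', a + b - a', by linarith [hv.1], by linarith, by linarith [hu.2], ?_⟩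
    have himg : f '' Icc (a + b - b') (a + b - a') = g '' Icc a' b' := by
      rw [← Set.image_const_sub_Icc, ← Set.image_comp]
      rfl
    rw [himg, k4]

/-- One-dimensional model of Theorem 4: if `I₀` lies to the left of `I₁` and
`I₀ → I₁`, `I₁ → I₁`, `I₁ → I₀`, then for every `n ≥ 2` there is `x ∈ I₀` with
`fⁿ(x) = x` and `f^j(x) ∈ I₁` for `1 ≤ j ≤ n-1`; if moreover the interiors are
disjoint and the orbit passes through the interiors, the least period of `x` is `n`. -/
theorem stmt_19 (f : ℝ → ℝ) (hf : Continuous f)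
    (a₀ b₀ a₁ b₁ : ℝ) (h₀ : a₀ ≤ b₀) (h₁ : a₁ ≤ b₁) (hle : b₀ ≤ a₁)
    (hc01 : Covers f (Set.Icc a₀ b₀) (Set.Icc a₁ b₁))
    (hc11 : Covers f (Set.Icc a₁ b₁) (Set.Icc a₁ b₁))
    (hc10 : Covers f (Set.Icc a₁ b₁) (Set.Icc a₀ b₀)) :
    ∀ n : ℕ, 2 ≤ n → ∃ x ∈ Set.Icc a₀ b₀, f^[n] x = x ∧
      (∀ j : ℕ, 1 ≤ j → j ≤ n - 1 → f^[j] x ∈ Set.Icc a₁ b₁) ∧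
      (Disjoint (interior (Set.Icc a₀ b₀)) (interior (Set.Icc a₁ b₁)) →
        x ∈ interior (Set.Icc a₀ b₀) →
        (∀ j : ℕ, 1 ≤ j → j ≤ n - 1 → f^[j] x ∈ interior (Set.Icc a₁ b₁)) →
        Function.minimalPeriod f x = n) := by
  -- Itinerary chains inside I₁ ending with one step onto I₀.
  have chain : ∀ k : ℕ, ∃ p q : ℝ, p ≤ q ∧
      (∀ j : ℕ, j ≤ k → f^[j] '' Icc p q ⊆ Icc a₁ b₁) ∧
      f^[k + 1] '' Icc p q = Icc a₀ b₀ := by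
    intro k
    induction k with
    | zero =>
      obtain ⟨p, q, hpq, hsub, himg⟩ := hc10
      exact ⟨p, q, hpq, fun j hj => by interval_cases j; simpa using hsub, by simpa using himg⟩
    | succ k ih =>
      obtain ⟨p, q, hpq, hsub, himg⟩ := ih
      obtain ⟨s, t, hst, hsub', himg'⟩ := hc11
      have hpq1 : Icc p q ⊆ f '' Icc s t := himg' ▸ (hsub 0 (Nat.zero_le _)).trans_eq' (by simp)
      obtain ⟨p', q', k1, k2, k3, k4⟩ := covers_sub f hf hpq hpq1
      refine ⟨p', q', k2, ?_, ?_⟩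
      · intro j hj
        cases j with
        | zero =>
          simpa using (Icc_subset_Icc k1 k3).trans hsub'
        | succ j =>
          rw [Function.iterate_succ, Set.image_comp, k4]
          exact hsub j (Nat.succ_le_succ_iff.mp hj)
      · rw [Function.iterate_succ, Set.image_comp, k4]
        exact himg
  intro n hn
  obtain ⟨k, rfl⟩ : ∃ k, n = k + 2 := ⟨n - 2, by omega⟩
  obtain ⟨p, q, hpq, hsub, himg⟩ := chain k
  obtain ⟨s, t, hst, hsub', himg'⟩ := hc01
  have hpq1 : Icc p q ⊆ f '' Icc s t := by
    rw [himg']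
    exact (hsub 0 (Nat.zero_le _)).trans_eq' (by simp)
  obtain ⟨p₀, q₀, k1, k2, k3, k4⟩ := covers_sub f hf hpq hpq1
  have hK₀ : Icc p₀ q₀ ⊆ Icc a₀ b₀ := (Icc_subset_Icc k1 k3).trans hsub'
  have hiter : ∀ j : ℕ, j ≤ k → f^[j + 1] '' Icc p₀ q₀ ⊆ Icc a₁ b₁ := by
    intro j hj
    rw [Function.iterate_succ, Set.image_comp, k4]
    exact hsub j hj
  have hItop : f^[k + 2] '' Icc p₀ q₀ = Icc a₀ b₀ := by
    rw [show k + 2 = (k + 1) + 1 from rfl, Function.iterate_succ, Set.image_comp, k4, himg]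
  -- fixed point of f^[k+2] in [p₀,q₀]
  obtain ⟨u, hu, hfu⟩ : ∃ u ∈ Icc p₀ q₀, f^[k+2] u = a₀ := by
    have : a₀ ∈ f^[k+2] '' Icc p₀ q₀ := hItop ▸ ⟨le_rfl, h₀⟩
    obtain ⟨u, hu, hfu⟩ := this; exact ⟨u, hu, hfu⟩
  obtain ⟨v, hv, hfv⟩ : ∃ v ∈ Icc p₀ q₀, f^[k+2] v = b₀ := by
    have : b₀ ∈ f^[k+2] '' Icc p₀ q₀ := hItop ▸ ⟨h₀, le_rfl⟩
    obtain ⟨v, hv, hfv⟩ := this; exact ⟨v, hv, hfv⟩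
  set g : ℝ → ℝ := fun y => f^[k+2] y - y with hg
  have hgc : Continuous g := (hf.iterate (k+2)).sub continuous_id
  have hgu : g u ≤ 0 := by
    have : a₀ ≤ u := (hK₀ hu).1
    show f^[k+2] u - u ≤ 0
    rw [hfu]; linarith
  have hgv : 0 ≤ g v := by
    have : v ≤ b₀ := (hK₀ hv).2
    show 0 ≤ f^[k+2] v - v
    rw [hfv]; linarith
  have h0mem : (0 : ℝ) ∈ uIcc (g u) (g v) := by
    rw [Set.mem_uIcc]; left; exact ⟨hgu, hgv⟩
  obtain ⟨x, hxuv, hgx⟩ := intermediate_value_uIcc hgc.continuousOn h0mem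
  have hxK : x ∈ Icc p₀ q₀ := by
    have : uIcc u v ⊆ Icc p₀ q₀ := Set.uIcc_subset_Icc hu hv
    exact this hxuv
  have hfix : f^[k+2] x = x := by
    have : f^[k+2] x - x = 0 := hgx
    linarith
  have horbit : ∀ j : ℕ, 1 ≤ j → j ≤ k + 2 - 1 → f^[j] x ∈ Icc a₁ b₁ := by
    intro j hj1 hj2
    obtain ⟨i, rfl⟩ : ∃ i, j = i + 1 := ⟨j - 1, by omega⟩
    exact hiter i (by omega) ⟨x, hxK, rfl⟩
  refine ⟨x, hK₀ hxK, hfix, horbit, ?_⟩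
  intro hdis hx0 hj
  have hper : Function.IsPeriodicPt f (k + 2) x := hfix
  have hm1 : 0 < Function.minimalPeriod f x := hper.minimalPeriod_pos (by omega)
  have hmn : Function.minimalPeriod f x ≤ k + 2 := hper.minimalPeriod_le (by omega)
  by_contra hne
  have hm2 : Function.minimalPeriod f x ≤ k + 1 := by omega
  have hmem : f^[Function.minimalPeriod f x] x ∈ interior (Icc a₁ b₁) :=
    hj _ hm1 (by omega)
  rw [Function.iterate_minimalPeriod] at hmem
  exact Set.disjoint_left.mp hdis hx0 hmem
end
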